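/- arXiv:2410.00694 — 6 statements merged into one kernel-verified Lean document; each statement's English description precedes it below -/
import Mathlib

section
/- Let s ≥ 2 be an integer and for each n ≥ 1 let (d_{0n}, ..., d_{(s-1)n}) be a tuple of integers forming a complete residue system modulo s, with |d_{jn}| ≤ L for all j, n. Then the set M = { Σ_{n=1}^∞ x_n / s^n : x_n ∈ {d_{0n}, ..., d_{(s-1)n}} for all n } has positive Lebesgue measure. -/
open MeasureTheory

private lemma kn_resid (s : ℕ) (hs : 2 ≤ s) (d : Fin s → ℕ → ℤ)
    (hres : ∀ n : ℕ, Function.Bijective (fun j : Fin s => (d j n : ZMod s))) :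
    ∀ N : ℕ, ∀ r : ℤ, ∃ j : ℕ → Fin s,
      (s:ℤ)^N ∣ (∑ n ∈ Finset.range N, d (j n) (n+1) * (s:ℤ)^(N-1-n)) - r := by
  have hne : Nonempty (Fin s) := ⟨⟨0, by omega⟩⟩
  intro N
  induction N with
  | zero => intro r; exact ⟨Classical.arbitrary _, by simp⟩
  | succ N ih =>
    intro r
    obtain ⟨j', hj'⟩ := (hres (N+1)).2 (r : ZMod s)
    have hdvd : (s:ℤ) ∣ r - d j' (N+1) := by
      have h1 : d j' (N+1) ≡ r [ZMOD (s:ℕ)] := (ZMod.intCast_eq_intCast_iff _ _ _).mp hj'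
      exact_mod_cast h1.dvd
    obtain ⟨r', hr'⟩ := hdvd
    obtain ⟨j, hj⟩ := ih r'
    refine ⟨Function.update j N j', ?_⟩
    rw [Finset.sum_range_succ]
    have hupd : ∀ n ∈ Finset.range N,
        d (Function.update j N j' n) (n+1) * (s:ℤ)^(N+1-1-n)
          = (s:ℤ) * (d (j n) (n+1) * (s:ℤ)^(N-1-n)) := by
      intro n hn
      have hn' : n < N := Finset.mem_range.mp hn
      rw [Function.update_of_ne (by omega)]
      have he : N+1-1-n = (N-1-n)+1 := by omega
      rw [he, pow_succ]
      ring
    rw [Finset.sum_congr rfl hupd, ← Finset.mul_sum]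
    have hN : Function.update j N j' N = j' := Function.update_self _ _ _
    rw [hN]
    obtain ⟨q, hq⟩ := hj
    have : (s:ℤ) * (∑ n ∈ Finset.range N, d (j n) (n+1) * (s:ℤ)^(N-1-n))
        + d j' (N+1) * (s:ℤ)^(N+1-1-N) - r = (s:ℤ)^(N+1) * q := by
      have h2 : N+1-1-N = 0 := by omega
      rw [h2, pow_succ]
      nlinarith [hq, hr']
    exact ⟨q, this⟩

set_option maxHeartbeats 1000000 in
/-- Kenyon-Nitecki type result: if each column of `d` is a complete residue system
mod `s` and entries are bounded by `L`, the set of subsums has positive Lebesgue measure. -/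
theorem stmt0 (s : ℕ) (hs : 2 ≤ s) (L : ℝ) (hL : 0 < L)
    (d : Fin s → ℕ → ℤ)
    (hres : ∀ n : ℕ, Function.Bijective (fun j : Fin s => (d j n : ZMod s)))
    (hbd : ∀ (j : Fin s) (n : ℕ), |(d j n : ℝ)| ≤ L)
    (M : Set ℝ)
    (hM : M = {x : ℝ | ∃ j : ℕ → Fin s,
      HasSum (fun n : ℕ => (d (j n) (n + 1) : ℝ) / (s : ℝ) ^ (n + 1)) x}) :
    0 < volume M := by
  have hs1 : (1:ℝ) < s := by exact_mod_cast hs.trans_lt' one_lt_two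
  have hs0 : (0:ℝ) < s := by linarith
  have hinv : (1:ℝ)/s < 1 := by rw [div_lt_one hs0]; linarith
  have hinv0 : (0:ℝ) ≤ 1/s := by positivity
  have hgeq : ∀ N n : ℕ, (L/(s:ℝ)^(N+1)) * (1/s)^n = L / (s:ℝ)^(N+1+n) := by
    intro N n
    rw [pow_add (s:ℝ) (N+1) n, div_pow, one_pow, div_mul_div_comm, mul_one]
  set F : (ℕ → Fin s) → ℝ := fun j => ∑' n : ℕ, (d (j n) (n+1) : ℝ) / (s:ℝ)^(n+1) with hF
  have hterm : ∀ (j : ℕ → Fin s) (n : ℕ),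
      ‖(d (j n) (n+1) : ℝ) / (s:ℝ)^(n+1)‖ ≤ (L/(s:ℝ)^(0+1)) * (1/s)^n := by
    intro j n
    rw [hgeq 0 n, Real.norm_eq_abs, abs_div,
      abs_of_pos (by positivity : (0:ℝ) < (s:ℝ)^(n+1)),
      show 0+1+n = n+1 by omega]
    exact div_le_div_of_nonneg_right (hbd _ _) (by positivity)
  have hgs : ∀ N : ℕ, Summable (fun n : ℕ => (L/(s:ℝ)^(N+1)) * (1/s:ℝ)^n) :=
    fun N => (summable_geometric_of_lt_one hinv0 hinv).mul_left _
  have hsum : ∀ j : ℕ → Fin s, Summable (fun n : ℕ => (d (j n) (n+1) : ℝ) / (s:ℝ)^(n+1)) :=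
    fun j => Summable.of_norm_bounded (hgs 0) (hterm j)
  -- tail bound
  have tail_bound : ∀ (j : ℕ → Fin s) (N : ℕ),
      |F j - ∑ n ∈ Finset.range N, (d (j n) (n+1) : ℝ) / (s:ℝ)^(n+1)| ≤ L / (s:ℝ)^N := by
    intro j N
    have hsplit := Summable.sum_add_tsum_nat_add (f := fun n : ℕ => (d (j n) (n+1) : ℝ) / (s:ℝ)^(n+1)) N (hsum j)
    have heq : F j - ∑ n ∈ Finset.range N, (d (j n) (n+1) : ℝ) / (s:ℝ)^(n+1)
        = ∑' n : ℕ, (d (j (n+N)) (n+N+1) : ℝ) / (s:ℝ)^(n+N+1) := by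
      rw [hF]; simp only []; linarith [hsplit]
    rw [heq]
    have hg2 : HasSum (fun n : ℕ => (L/(s:ℝ)^(N+1)) * (1/s)^n)
        ((L/(s:ℝ)^(N+1)) * (1-1/(s:ℝ))⁻¹) :=
      (hasSum_geometric_of_lt_one hinv0 hinv).mul_left _
    have hb2 : ∀ n : ℕ, ‖(d (j (n+N)) (n+N+1) : ℝ) / (s:ℝ)^(n+N+1)‖ ≤ (L/(s:ℝ)^(N+1)) * (1/s)^n := by
      intro n
      rw [hgeq N n, Real.norm_eq_abs, abs_div,
        abs_of_pos (by positivity : (0:ℝ) < (s:ℝ)^(n+N+1)),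
        show N+1+n = n+N+1 by omega]
      exact div_le_div_of_nonneg_right (hbd _ _) (by positivity)
    have hmain := tsum_of_norm_bounded hg2 hb2
    rw [Real.norm_eq_abs] at hmain
    refine hmain.trans ?_
    have h3 : (1 - 1/(s:ℝ))⁻¹ ≤ s := by
      have h12 : (1:ℝ)/s ≤ 1/2 :=
        one_div_le_one_div_of_le two_pos (by exact_mod_cast hs)
      rw [inv_le_comm₀ (by linarith) hs0, inv_eq_one_div]
      linarith
    calc L/(s:ℝ)^(N+1) * (1-1/(s:ℝ))⁻¹ ≤ L/(s:ℝ)^(N+1) * s :=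
          mul_le_mul_of_nonneg_left h3 (by positivity)
      _ = L / (s:ℝ)^N := by
          rw [pow_succ, ← div_div, div_mul_cancel₀ _ (ne_of_gt hs0)]
  have hFbd : ∀ j : ℕ → Fin s, |F j| ≤ L := by
    intro j
    have := tail_bound j 0
    simpa using this
  -- M is the range of F
  have hMeq : M = Set.range F := by
    rw [hM]
    ext x
    constructor
    · rintro ⟨j, hj⟩
      exact ⟨j, (hj.unique ((hsum j).hasSum)).symm⟩
    · rintro ⟨j, rfl⟩
      exact ⟨j, (hsum j).hasSum⟩
  -- M is compact
  have hcomp : IsCompact M := by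
    rw [hMeq]
    apply isCompact_range
    apply continuous_tsum (u := fun n : ℕ => (L/(s:ℝ)^(0+1)) * (1/s:ℝ)^n)
    · intro n
      exact (Continuous.comp (continuous_of_discreteTopology
        (f := fun i : Fin s => (d i (n+1) : ℝ) / (s:ℝ)^(n+1))) (continuous_apply n))
    · exact hgs 0
    · intro n j; exact hterm j n
  -- partial sums as integer / s^N
  have partial_eq : ∀ (j : ℕ → Fin s) (N : ℕ),
      ∑ n ∈ Finset.range N, (d (j n) (n+1) : ℝ) / (s:ℝ)^(n+1)
        = ((∑ n ∈ Finset.range N, d (j n) (n+1) * (s:ℤ)^(N-1-n) : ℤ) : ℝ) / (s:ℝ)^N := by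
    intro j N
    push_cast
    rw [Finset.sum_div]
    refine Finset.sum_congr rfl ?_
    intro n hn
    have hn' : n < N := Finset.mem_range.mp hn
    have hNs : (s:ℝ)^N = (s:ℝ)^(N-1-n) * (s:ℝ)^(n+1) := by
      rw [← pow_add]
      congr 1
      omega
    calc (d (j n) (n+1) : ℝ) / (s:ℝ)^(n+1)
        = ((s:ℝ)^(N-1-n) * (d (j n) (n+1) : ℝ)) / ((s:ℝ)^(N-1-n) * (s:ℝ)^(n+1)) :=
          (mul_div_mul_left _ _ (by positivity)).symm
      _ = (d (j n) (n+1) : ℝ) * (s:ℝ)^(N-1-n) / (s:ℝ)^N := by rw [hNs]; ring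
  -- key approximation
  have key : ∀ (N : ℕ) (r : ℤ), ∃ x ∈ M, ∃ m : ℤ,
      |x - ((r:ℝ)/(s:ℝ)^N + m)| ≤ L / (s:ℝ)^N := by
    intro N r
    obtain ⟨j, q, hq⟩ := kn_resid s hs d hres N r
    refine ⟨F j, by rw [hMeq]; exact ⟨j, rfl⟩, q, ?_⟩
    have hsN' : (0:ℝ) < (s:ℝ)^N := by positivity
    have hA : (∑ n ∈ Finset.range N, d (j n) (n+1) * (s:ℤ)^(N-1-n)) = r + (s:ℤ)^N * q := by
      linarith [hq]
    have hps : ((∑ n ∈ Finset.range N, d (j n) (n+1) * (s:ℤ)^(N-1-n) : ℤ) : ℝ)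
        = (r:ℝ) + (s:ℝ)^N * (q:ℝ) := by
      exact_mod_cast congrArg (fun z : ℤ => (z : ℝ)) hA
    have h2 : (r:ℝ)/(s:ℝ)^N + q
        = ∑ n ∈ Finset.range N, (d (j n) (n+1) : ℝ) / (s:ℝ)^(n+1) := by
      rw [partial_eq j N, hps, add_div, mul_comm ((s:ℝ)^N) (q:ℝ), mul_div_assoc,
        div_self (ne_of_gt hsN'), mul_one]
    rw [h2]
    exact tail_bound j N
  -- constant K
  set K : ℕ := ⌈2*L+1⌉₊ with hK
  have hKbd : 2*L+1 ≤ (K:ℝ) := Nat.le_ceil _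
  -- thickening lower bound
  have thick : ∀ ε : ℝ, 0 < ε →
      (((2*K+1 : ℕ)) : ENNReal)⁻¹ ≤ volume (Metric.thickening ε M) := by
    intro ε hε
    obtain ⟨N, hN⟩ := pow_unbounded_of_one_lt ((L+1)/ε) hs1
    have hsN : (0:ℝ) < (s:ℝ)^N := by positivity
    have hsN1 : (1:ℝ) ≤ (s:ℝ)^N := one_le_pow₀ (by linarith)
    have hNe : (L+1) / (s:ℝ)^N < ε := by
      rw [div_lt_iff₀ hsN]
      rw [div_lt_iff₀ hε] at hN
      linarith [hN]
    have cover : Set.Ico (0:ℝ) 1 ⊆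
        ⋃ m ∈ Finset.Icc (-(K:ℤ)) (K:ℤ), (fun x : ℝ => x + (m:ℝ)) ⁻¹' (Metric.thickening ε M) := by
      intro t ht
      obtain ⟨ht0, ht1⟩ := ht
      set r : ℤ := ⌊t * (s:ℝ)^N⌋ with hr
      have hr0 : 0 ≤ r := Int.le_floor.mpr (by simpa using mul_nonneg ht0 hsN.le)
      have hrle : (r:ℝ) ≤ t * (s:ℝ)^N := Int.floor_le _
      have hrlt : t * (s:ℝ)^N < r + 1 := Int.lt_floor_add_one _
      have hrlt' : (r:ℝ) < (s:ℝ)^N := by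
        calc (r:ℝ) ≤ t * (s:ℝ)^N := hrle
          _ < 1 * (s:ℝ)^N := by exact mul_lt_mul_of_pos_right ht1 hsN
          _ = (s:ℝ)^N := one_mul _
      obtain ⟨x, hxM, m, hxm⟩ := key N r
      -- bound on m
      have hrN0 : 0 ≤ (r:ℝ)/(s:ℝ)^N := by positivity
      have hrN1 : (r:ℝ)/(s:ℝ)^N < 1 := by rwa [div_lt_one hsN]
      have hLN : L / (s:ℝ)^N ≤ L := by
        rw [div_le_iff₀ hsN]
        nlinarith
      have hxL : |x| ≤ L := by
        rw [hMeq] at hxM; obtain ⟨j, rfl⟩ := hxM; exact hFbd j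
      have hmbd : |(m:ℝ)| ≤ 2*L+1 := by
        have h1 : |x - ((r:ℝ)/(s:ℝ)^N + m)| ≤ L := hxm.trans hLN
        rw [abs_le] at h1 hxL ⊢
        constructor <;> nlinarith
      have hmK : m ∈ Finset.Icc (-(K:ℤ)) (K:ℤ) := by
        rw [Finset.mem_Icc]
        have : |(m:ℝ)| ≤ (K:ℝ) := hmbd.trans hKbd
        rw [abs_le] at this
        constructor <;> [exact_mod_cast this.1; exact_mod_cast this.2]
      refine Set.mem_biUnion hmK ?_
      simp only [Set.mem_preimage]
      -- t + m is within ε of x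
      have e1 : (r:ℝ)/(s:ℝ)^N ≤ t := by
        rw [div_le_iff₀ hsN]; linarith
      have e2 : t ≤ (r:ℝ)/(s:ℝ)^N + 1/(s:ℝ)^N := by
        rw [← add_div, le_div_iff₀ hsN]; linarith
      have h2 : |t - (r:ℝ)/(s:ℝ)^N| ≤ 1 / (s:ℝ)^N := by
        rw [abs_le]; constructor <;> [linarith; linarith]
      have hdist : dist (t + (m:ℝ)) x < ε := by
        rw [Real.dist_eq]
        have heq2 : t + (m:ℝ) - x = (t - (r:ℝ)/(s:ℝ)^N) + (((r:ℝ)/(s:ℝ)^N + m) - x) := by ring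
        have h4 : |((r:ℝ)/(s:ℝ)^N + m) - x| ≤ L / (s:ℝ)^N := by
          rw [abs_sub_comm]; exact hxm
        have hdiv : (L+1)/(s:ℝ)^N = L/(s:ℝ)^N + 1/(s:ℝ)^N := add_div _ _ _
        have h5 : |t + (m:ℝ) - x| ≤ (L+1)/(s:ℝ)^N := by
          rw [heq2]
          refine (abs_add_le _ _).trans ?_
          linarith
        linarith
      exact Metric.mem_thickening_iff.mpr ⟨x, hxM, hdist⟩
    have h1 : (1:ENNReal) ≤ ∑ m ∈ Finset.Icc (-(K:ℤ)) (K:ℤ),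
        volume ((fun x : ℝ => x + (m:ℝ)) ⁻¹' (Metric.thickening ε M)) := by
      have hvol : volume (Set.Ico (0:ℝ) 1) = 1 := by simp
      calc (1:ENNReal) = volume (Set.Ico (0:ℝ) 1) := hvol.symm
        _ ≤ volume (⋃ m ∈ Finset.Icc (-(K:ℤ)) (K:ℤ),
              (fun x : ℝ => x + (m:ℝ)) ⁻¹' (Metric.thickening ε M)) := measure_mono cover
        _ ≤ ∑ m ∈ Finset.Icc (-(K:ℤ)) (K:ℤ),
              volume ((fun x : ℝ => x + (m:ℝ)) ⁻¹' (Metric.thickening ε M)) :=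
            measure_biUnion_finset_le _ _
    have h2 : ∀ m : ℤ, volume ((fun x : ℝ => x + (m:ℝ)) ⁻¹' (Metric.thickening ε M))
        = volume (Metric.thickening ε M) := fun m =>
      measure_preimage_add_right volume _ _
    rw [Finset.sum_congr rfl (fun m _ => h2 m), Finset.sum_const] at h1
    have hcard : (Finset.Icc (-(K:ℤ)) (K:ℤ)).card = 2*K+1 := by
      rw [Int.card_Icc]
      omega
    rw [hcard, nsmul_eq_mul] at h1
    have hc0 : ((2*K+1:ℕ) : ENNReal) ≠ 0 := by
      simp
    have hct : ((2*K+1:ℕ) : ENNReal) ≠ ⊤ := ENNReal.natCast_ne_top _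
    calc ((2*K+1:ℕ):ENNReal)⁻¹ = ((2*K+1:ℕ):ENNReal)⁻¹ * 1 := (mul_one _).symm
      _ ≤ ((2*K+1:ℕ):ENNReal)⁻¹ * (((2*K+1:ℕ):ENNReal) * volume (Metric.thickening ε M)) := by
          gcongr
      _ = volume (Metric.thickening ε M) := by
          rw [← mul_assoc, ENNReal.inv_mul_cancel hc0 hct, one_mul]
  -- conclude
  have htendsto : Filter.Tendsto (fun r : ℝ => volume (Metric.cthickening r M))
      (nhdsWithin (0:ℝ) (Set.Ioi 0)) (nhds (volume M)) :=
    (tendsto_measure_cthickening_of_isCompact (μ := volume) hcomp).mono_left nhdsWithin_le_nhds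
  have hev : ∀ᶠ ε in nhdsWithin (0:ℝ) (Set.Ioi 0),
      ((2*K+1:ℕ):ENNReal)⁻¹ ≤ volume (Metric.cthickening ε M) := by
    filter_upwards [self_mem_nhdsWithin] with ε hε
    exact (thick ε hε).trans (measure_mono (Metric.thickening_subset_cthickening ε M))
  have hfin : ((2*K+1:ℕ):ENNReal)⁻¹ ≤ volume M := ge_of_tendsto htendsto hev
  have hpos : (0:ENNReal) < ((2*K+1:ℕ):ENNReal)⁻¹ :=
    ENNReal.inv_pos.mpr (ENNReal.natCast_ne_top _)
  exact lt_of_lt_of_le hpos hfin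
end

section
/- Key induction step: with the setup above (uniform probabilities 1/s and complete residue systems mod s), for every integer r and every n there is at most one j ∈ {0,...,s-1} with d_{j(n+1)} ≡ r (mod s), and consequently S(r, n+1) ≤ (1/s) · max over r' of S(r', n). -/
open MeasureTheory Finset

/-- Key induction step: for each `r` there is at most one `j` with
`d j (n+1) ≡ r (mod s)`, and hence `S(r, n+1) ≤ (1/s) * sup_{r'} S(r', n)`. -/
theorem stmt2 (s : ℕ) (hs : 2 ≤ s) (d : Fin s → ℕ → ℤ)
    (hres : ∀ n : ℕ, Function.Bijective (fun j : Fin s => (d j n : ZMod s)))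
    (p : Fin s → ℕ → ℝ) (hp : ∀ (j : Fin s) (n : ℕ), p j n = 1 / s)
    (S : ℤ → ℕ → ℝ)
    (hS : ∀ (r : ℤ) (n : ℕ), S r n =
      ∑ j : Fin n → Fin s,
        if (∑ k : Fin n, d (j k) (k.1 + 1) * (s : ℤ) ^ (n - (k.1 + 1))) = r
        then ∏ k : Fin n, p (j k) (k.1 + 1) else 0) :
    ∀ (r : ℤ) (n : ℕ),
      {j : Fin s | (d j (n + 1) : ZMod s) = (r : ZMod s)}.Subsingleton ∧
      S r (n + 1) ≤ (1 / s) * ⨆ r' : ℤ, S r' n := by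
  have hs0 : 0 < s := by omega
  have hsR : (0:ℝ) < s := by exact_mod_cast hs0
  have hsZ : (s:ℤ) ≠ 0 := by exact_mod_cast hs0.ne'
  -- counting form of S
  have hSc : ∀ (r : ℤ) (n : ℕ), S r n =
      ∑ j : Fin n → Fin s,
        if (∑ k : Fin n, d (j k) (k.1 + 1) * (s : ℤ) ^ (n - (k.1 + 1))) = r
        then ((1:ℝ)/s)^n else 0 := by
    intro r n
    rw [hS]
    refine Finset.sum_congr rfl fun j _ => ?_
    simp [hp]
  have hSnn : ∀ (r : ℤ) (n : ℕ), 0 ≤ S r n := by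
    intro r n
    rw [hSc]
    refine Finset.sum_nonneg fun j _ => ?_
    split <;> positivity
  have hSle : ∀ (r : ℤ) (n : ℕ), S r n ≤ 1 := by
    intro r n
    rw [hSc]
    calc (∑ j : Fin n → Fin s,
        if (∑ k : Fin n, d (j k) (k.1 + 1) * (s : ℤ) ^ (n - (k.1 + 1))) = r
        then ((1:ℝ)/s)^n else 0)
        ≤ ∑ _j : Fin n → Fin s, ((1:ℝ)/s)^n := by
          refine Finset.sum_le_sum fun j _ => ?_
          split
          · exact le_rfl
          · positivity
      _ = (s^n : ℕ) * ((1:ℝ)/s)^n := by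
          simp [Finset.card_univ, mul_comm]
      _ = 1 := by
          push_cast
          rw [← mul_pow, mul_one_div, div_self hsR.ne', one_pow]
  have hbdd : ∀ n : ℕ, BddAbove (Set.range fun r' : ℤ => S r' n) := by
    intro n
    exact ⟨1, by rintro x ⟨r', rfl⟩; exact hSle r' n⟩
  have hsup0 : ∀ n : ℕ, 0 ≤ ⨆ r' : ℤ, S r' n := fun n =>
    le_trans (hSnn 0 n) (le_ciSup (hbdd n) 0)
  intro r n
  have hsub : {j : Fin s | (d j (n + 1) : ZMod s) = (r : ZMod s)}.Subsingleton := by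
    intro a ha b hb
    exact (hres (n+1)).injective (by simpa using ha.trans hb.symm)
  refine ⟨hsub, ?_⟩
  -- abbreviation for the truncated digit sum
  set T : (Fin n → Fin s) → ℤ :=
    fun g => ∑ k : Fin n, d (g k) (k.1 + 1) * (s : ℤ) ^ (n - (k.1 + 1)) with hT
  -- rewrite the digit sum for a snoc tuple
  have hsum : ∀ (g : Fin n → Fin s) (a : Fin s),
      (∑ k : Fin (n+1), d ((Fin.snoc g a : Fin (n+1) → Fin s) k) (k.1 + 1) * (s : ℤ) ^ (n + 1 - (k.1 + 1)))
        = s * T g + d a (n + 1) := by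
    intro g a
    rw [Fin.sum_univ_castSucc]
    congr 1
    · rw [hT, Finset.mul_sum]
      refine Finset.sum_congr rfl fun i _ => ?_
      have h1 : (Fin.snoc g a : Fin (n+1) → Fin s) i.castSucc = g i := by simp
      have h2 : (i.castSucc : Fin (n+1)).1 = i.1 := rfl
      rw [h1, h2]
      have h3 : n + 1 - (i.1 + 1) = (n - (i.1 + 1)) + 1 := by omega
      rw [h3, pow_succ]
      ring
    · simp [Fin.snoc_last]
  -- main estimate
  have key : ∀ a : Fin s,
      (∑ g : Fin n → Fin s,
        if (s:ℤ) * T g + d a (n + 1) = r then ((1:ℝ)/s)^(n+1) else 0)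
      ≤ if (d a (n + 1) : ZMod s) = (r : ZMod s)
        then (1/s) * ⨆ r' : ℤ, S r' n else 0 := by
    intro a
    by_cases hca : (d a (n + 1) : ZMod s) = (r : ZMod s)
    · rw [if_pos hca]
      calc (∑ g : Fin n → Fin s,
            if (s:ℤ) * T g + d a (n + 1) = r then ((1:ℝ)/s)^(n+1) else 0)
          ≤ ∑ g : Fin n → Fin s,
            (1/s) * (if T g = (r - d a (n + 1)) / s then ((1:ℝ)/s)^n else 0) := by
            refine Finset.sum_le_sum fun g _ => ?_
            by_cases h : (s:ℤ) * T g + d a (n + 1) = r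
            · rw [if_pos h, if_pos, pow_succ]
              · ring_nf
                exact le_rfl
              · have : r - d a (n+1) = (s:ℤ) * T g := by omega
                rw [this, Int.mul_ediv_cancel_left _ hsZ]
            · rw [if_neg h]
              split <;> positivity
        _ = (1/s) * S ((r - d a (n + 1)) / s) n := by
            rw [← Finset.mul_sum, hSc]
        _ ≤ (1/s) * ⨆ r' : ℤ, S r' n := by
            refine mul_le_mul_of_nonneg_left (le_ciSup (hbdd n) _) (by positivity)
    · rw [if_neg hca]
      refine le_of_eq (Finset.sum_eq_zero fun g _ => ?_)
      rw [if_neg]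
      intro h
      apply hca
      have : (((s:ℤ) * T g + d a (n + 1) : ℤ) : ZMod s) = (r : ZMod s) := by rw [h]
      simpa [ZMod.natCast_self] using this
  -- put everything together
  calc S r (n + 1)
      = ∑ a : Fin s, ∑ g : Fin n → Fin s,
          if (s:ℤ) * T g + d a (n + 1) = r then ((1:ℝ)/s)^(n+1) else 0 := by
        rw [hSc]
        rw [← Equiv.sum_comp (Fin.snocEquiv (fun _ => Fin s))
          (fun j : Fin (n+1) → Fin s =>
            if (∑ k : Fin (n+1), d (j k) (k.1 + 1) * (s : ℤ) ^ (n + 1 - (k.1 + 1))) = r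
            then ((1:ℝ)/s)^(n+1) else 0)]
        rw [Fintype.sum_prod_type]
        refine Finset.sum_congr rfl fun a _ => Finset.sum_congr rfl fun g _ => ?_
        simp only [Fin.snocEquiv, Equiv.coe_fn_mk]
        simp only [hsum g a]
    _ ≤ ∑ a : Fin s,
          (if (d a (n + 1) : ZMod s) = (r : ZMod s)
           then (1/s) * ⨆ r' : ℤ, S r' n else 0) :=
        Finset.sum_le_sum fun a _ => key a
    _ ≤ (1/s) * ⨆ r' : ℤ, S r' n := by
        rw [← Finset.sum_filter]
        have hcard : (Finset.univ.filter
            fun a : Fin s => (d a (n + 1) : ZMod s) = (r : ZMod s)).card ≤ 1 := by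
          refine Finset.card_le_one.mpr fun a ha b hb => ?_
          exact hsub (Finset.mem_filter.mp ha).2 (Finset.mem_filter.mp hb).2
        rw [Finset.sum_const, nsmul_eq_mul]
        calc ((Finset.univ.filter
              fun a : Fin s => (d a (n + 1) : ZMod s) = (r : ZMod s)).card : ℝ)
              * ((1/s) * ⨆ r' : ℤ, S r' n)
            ≤ 1 * ((1/s) * ⨆ r' : ℤ, S r' n) := by
              refine mul_le_mul_of_nonneg_right ?_
                (mul_nonneg (by positivity) (hsup0 n))
              exact_mod_cast hcard
          _ = (1/s) * ⨆ r' : ℤ, S r' n := one_mul _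
end

section
/- Let (ψ_k) be independent random variables where ψ_k takes values in a finite set of size s with maximum probability m_k = max_j p_{jk}. If Π_{k=1}^∞ m_k > 0, then the distribution of ψ = Σ_{k=1}^∞ ψ_k γ^k (with 0 < γ < 1 and the values of each ψ_k uniformly bounded) has an atom, i.e., the distribution is not continuous. -/
open MeasureTheory ProbabilityTheory

/-- Levy-type criterion: if the product of maximal probabilities is positive, then
the distribution of `ψ = Σ ψ_k γ^k` has an atom. -/
theorem stmt5 {Ω : Type*} [MeasureSpace Ω] [IsProbabilityMeasure (ℙ : Measure Ω)]
    (γ : ℝ) (hγ : γ ∈ Set.Ioo (0 : ℝ) 1) (s : ℕ) (hs : 2 ≤ s) (L : ℝ) (hL : 0 < L)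
    (d : Fin s → ℕ → ℝ) (hbd : ∀ (j : Fin s) (k : ℕ), |d j k| ≤ L)
    (p : Fin s → ℕ → ℝ) (hp0 : ∀ j k, 0 ≤ p j k) (hp1 : ∀ k, ∑ j : Fin s, p j k = 1)
    (ψk : ℕ → Ω → ℝ) (hmeas : ∀ k, Measurable (ψk k))
    (hindep : iIndepFun ψk (ℙ : Measure Ω))
    (hval : ∀ (j : Fin s) (k : ℕ),
      (ℙ : Measure Ω) {ω | ψk k ω = d j k} = ENNReal.ofReal (p j k))
    (hrange : ∀ (k : ℕ) (ω : Ω), ∃ j : Fin s, ψk k ω = d j k)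
    (m : ℕ → ℝ) (hm : ∀ k, m k = ⨆ j : Fin s, p j k)
    (c : ℝ) (hc : 0 < c)
    (hW : Filter.Tendsto (fun N : ℕ => ∏ k ∈ Finset.range N, m k)
      Filter.atTop (nhds c))
    (ψ : Ω → ℝ) (hψ : ∀ ω, ψ ω = ∑' k : ℕ, ψk k ω * γ ^ (k + 1)) :
    ∃ x : ℝ, 0 < (ℙ : Measure Ω) {ω | ψ ω = x} := by
  have hsne : Nonempty (Fin s) := ⟨⟨0, by omega⟩⟩
  choose j hj using fun k => Finite.exists_max (fun j : Fin s => p j k)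
  have hmj : ∀ k, m k = p (j k) k := fun k => by
    rw [hm k]
    exact le_antisymm (ciSup_le (hj k)) (le_ciSup (f := fun j : Fin s => p j k) (Finite.bddAbove_range _) (j k))
  set A : ℕ → Set Ω := fun k => {ω | ψk k ω = d (j k) k} with hA
  refine ⟨∑' k, d (j k) k * γ ^ (k + 1), ?_⟩
  have hsub : (⋂ k, A k) ⊆ {ω | ψ ω = ∑' k, d (j k) k * γ ^ (k + 1)} := by
    intro ω hω
    simp only [Set.mem_iInter, hA, Set.mem_setOf_eq] at hω ⊢
    rw [hψ ω]
    exact tsum_congr fun k => by rw [hω k]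
  have hAeq : ∀ k, A k = ψk k ⁻¹' {d (j k) k} := fun k => rfl
  have hmeasA : ∀ k,
      MeasurableSet[(inferInstance : MeasurableSpace ℝ).comap (ψk k)] (A k) :=
    fun k => ⟨{d (j k) k}, measurableSet_singleton _, (hAeq k).symm⟩
  have hfin : ∀ N : ℕ, (ℙ : Measure Ω) (⋂ k ∈ Finset.range N, A k)
      = ∏ k ∈ Finset.range N, ENNReal.ofReal (m k) := by
    intro N
    rw [hindep.meas_biInter (fun i _ => hmeasA i)]
    exact Finset.prod_congr rfl fun k _ => by rw [hval (j k) k, hmj k]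
  have hanti : Antitone (fun N : ℕ => ⋂ k ∈ Finset.range N, A k) := by
    intro a b hab ω hω
    simp only [Set.mem_iInter, Finset.mem_range] at hω ⊢
    exact fun k hk => hω k (hk.trans_le hab)
  have hnm : ∀ N : ℕ, NullMeasurableSet ((fun N : ℕ => ⋂ k ∈ Finset.range N, A k) N) ℙ := by
    intro N
    exact (MeasurableSet.biInter (Set.to_countable _)
      (fun k _ => (hmeas k) (measurableSet_singleton _))).nullMeasurableSet
  have htend := tendsto_measure_iInter_atTop hnm hanti ⟨0, by simp [measure_ne_top]⟩
  have hIeq : (⋂ N : ℕ, ⋂ k ∈ Finset.range N, A k) = ⋂ k, A k := by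
    ext ω
    simp only [Set.mem_iInter, Finset.mem_range]
    exact ⟨fun h k => h (k + 1) k (by omega), fun h N k _ => h k⟩
  rw [hIeq] at htend
  have h0 : ∀ k, 0 ≤ m k := fun k => (hmj k).symm ▸ hp0 (j k) k
  have htend2 : Filter.Tendsto ((ℙ : Measure Ω) ∘ fun N : ℕ => ⋂ k ∈ Finset.range N, A k)
      Filter.atTop (nhds (ENNReal.ofReal c)) := by
    have : ((ℙ : Measure Ω) ∘ fun N : ℕ => ⋂ k ∈ Finset.range N, A k)
        = fun N => ENNReal.ofReal (∏ k ∈ Finset.range N, m k) := by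
      funext N
      rw [Function.comp_apply, hfin N, ← ENNReal.ofReal_prod_of_nonneg (fun k _ => h0 k)]
    rw [this]
    exact (ENNReal.continuous_ofReal.continuousAt).tendsto.comp hW
  have hkey : (ℙ : Measure Ω) (⋂ k, A k) = ENNReal.ofReal c :=
    tendsto_nhds_unique htend htend2
  calc (0 : ENNReal) < ENNReal.ofReal c := by simpa using hc
    _ = (ℙ : Measure Ω) (⋂ k, A k) := hkey.symm
    _ ≤ _ := measure_mono hsub
end

section
/- Kakutani dichotomy consequence: let (Ω_k, A_k) be finite measurable spaces of size s with two product measures μ = ⊗μ_k and ν = ⊗ν_k, where ν_k is uniform (each point has mass 1/s) and μ_k assigns mass p_{jk} to the j-th point. If Π_{k=1}^∞ Σ_{j=0}^{s-1} √(p_{jk}/s) > 0, then μ is absolutely continuous with respect to ν. -/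
open Finset

lemma kak_sqrt_prod {ι : Type*} (s : Finset ι) (f : ι → ℝ) (hf : ∀ i ∈ s, 0 ≤ f i) :
    Real.sqrt (∏ i ∈ s, f i) = ∏ i ∈ s, Real.sqrt (f i) := by
  induction s using Finset.cons_induction with
  | empty => simp
  | cons a s ha ih =>
    rw [prod_cons, prod_cons, Real.sqrt_mul (hf a (mem_cons_self a s)),
      ih (fun i hi => hf i (mem_cons.2 (Or.inr hi)))]

lemma kak_minkowski {ι : Type*} (s : Finset ι) (u v : ι → ℝ) :
    Real.sqrt (∑ i ∈ s, (u i + v i)^2)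
      ≤ Real.sqrt (∑ i ∈ s, u i ^ 2) + Real.sqrt (∑ i ∈ s, v i ^ 2) := by
  have hcs : ∑ i ∈ s, u i * v i
      ≤ Real.sqrt (∑ i ∈ s, u i ^ 2) * Real.sqrt (∑ i ∈ s, v i ^ 2) := by
    have h2 : ∑ i ∈ s, u i * v i ≤ Real.sqrt ((∑ i ∈ s, u i * v i)^2) := by
      rw [Real.sqrt_sq_eq_abs]; exact le_abs_self _
    refine h2.trans ?_
    rw [← Real.sqrt_mul (by positivity)]
    exact Real.sqrt_le_sqrt (Finset.sum_mul_sq_le_sq_mul_sq s u v)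
  have hu : (Real.sqrt (∑ i ∈ s, u i ^2))^2 = ∑ i ∈ s, u i ^2 := Real.sq_sqrt (by positivity)
  have hv : (Real.sqrt (∑ i ∈ s, v i ^2))^2 = ∑ i ∈ s, v i ^2 := Real.sq_sqrt (by positivity)
  have key : ∑ i ∈ s, (u i + v i)^2
      ≤ (Real.sqrt (∑ i ∈ s, u i ^2) + Real.sqrt (∑ i ∈ s, v i ^2))^2 := by
    have : ∑ i ∈ s, (u i + v i)^2
        = ∑ i ∈ s, u i^2 + 2 * (∑ i ∈ s, u i * v i) + ∑ i ∈ s, v i ^2 := by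
      rw [Finset.mul_sum, ← Finset.sum_add_distrib, ← Finset.sum_add_distrib]
      exact Finset.sum_congr rfl fun i _ => by ring
    rw [this]; nlinarith [hcs]
  calc Real.sqrt (∑ i ∈ s, (u i + v i)^2) ≤ Real.sqrt ((Real.sqrt (∑ i ∈ s, u i ^2) + Real.sqrt (∑ i ∈ s, v i ^2))^2) :=
        Real.sqrt_le_sqrt key
    _ = _ := Real.sqrt_sq (by positivity)


lemma kak_key (s : ℕ) (hs : 1 ≤ s) (p : Fin s → ℕ → ℝ)
    (hp0 : ∀ j k, 0 ≤ p j k) (hp1 : ∀ k, ∑ j : Fin s, p j k = 1)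
    (m n : ℕ) (hmn : m ≤ n) (S : Finset (Fin n → Fin s)) :
    Real.sqrt (∑ y ∈ S, ∏ i : Fin n, p (y i) i)
      ≤ Real.sqrt ((S.card : ℝ) * (s:ℝ)^m / (s:ℝ)^n)
        + Real.sqrt (2 * (1 - ∏ k ∈ Finset.Ico m n, ∑ j : Fin s, Real.sqrt (p j k / s))) := by
  have hσ : (0:ℝ) < (s:ℝ) := by exact_mod_cast hs
  have hple1 : ∀ j k, p j k ≤ 1 := by
    intro j k
    calc p j k ≤ ∑ j' : Fin s, p j' k :=
          Finset.single_le_sum (fun j' _ => hp0 j' k) (mem_univ j)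
      _ = 1 := hp1 k
  set Q : (Fin n → Fin s) → ℝ := fun y => ∏ i : Fin n, (if (i:ℕ) < m then p (y i) (i:ℕ) else 1) with hQdef
  set R : (Fin n → Fin s) → ℝ := fun y => ∏ i : Fin n, (if (i:ℕ) < m then 1 else p (y i) (i:ℕ)) with hRdef
  have hQ0 : ∀ y, 0 ≤ Q y := fun y => Finset.prod_nonneg fun i _ => by
    split_ifs; exacts [hp0 _ _, zero_le_one]
  have hR0 : ∀ y, 0 ≤ R y := fun y => Finset.prod_nonneg fun i _ => by
    split_ifs; exacts [zero_le_one, hp0 _ _]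
  have hQR : ∀ y, Q y * R y = ∏ i : Fin n, p (y i) (i:ℕ) := by
    intro y
    rw [hQdef, hRdef, ← Finset.prod_mul_distrib]
    exact Finset.prod_congr rfl fun i _ => by split_ifs <;> ring
  have hQle1 : ∀ y, Q y ≤ 1 := fun y => Finset.prod_le_one
    (fun i _ => by split_ifs; exacts [hp0 _ _, zero_le_one])
    (fun i _ => by split_ifs; exacts [hple1 _ _, le_refl 1])
  set r : ℝ := Real.sqrt (((s:ℝ) ^ (n - m))⁻¹) with hrdef
  set u : (Fin n → Fin s) → ℝ := fun y => Real.sqrt (Q y) * r with hudef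
  set v : (Fin n → Fin s) → ℝ := fun y => Real.sqrt (Q y) * (Real.sqrt (R y) - r) with hvdef
  have huv : ∀ y, u y + v y = Real.sqrt (Q y) * Real.sqrt (R y) := fun y => by
    rw [hudef, hvdef]; ring
  -- step 1: rewrite the sum
  have step1 : ∑ y ∈ S, ∏ i : Fin n, p (y i) (i:ℕ) = ∑ y ∈ S, (u y + v y)^2 := by
    refine Finset.sum_congr rfl fun y _ => ?_
    rw [huv y, mul_pow, Real.sq_sqrt (hQ0 y), Real.sq_sqrt (hR0 y), hQR y]
  -- step 3 : bound on Σ u²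
  have hr2 : r ^ 2 = ((s:ℝ) ^ (n - m))⁻¹ := Real.sq_sqrt (by positivity)
  have step3 : ∑ y ∈ S, u y ^ 2 ≤ (S.card : ℝ) * (s:ℝ)^m / (s:ℝ)^n := by
    have h1 : ∑ y ∈ S, u y ^ 2 ≤ ∑ y ∈ S, ((s:ℝ) ^ (n - m))⁻¹ := by
      refine Finset.sum_le_sum fun y _ => ?_
      rw [hudef, mul_pow, Real.sq_sqrt (hQ0 y), hr2]
      calc Q y * ((s:ℝ) ^ (n - m))⁻¹ ≤ 1 * ((s:ℝ) ^ (n - m))⁻¹ := by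
            apply mul_le_mul_of_nonneg_right (hQle1 y) (by positivity)
        _ = _ := one_mul _
    rw [Finset.sum_const, nsmul_eq_mul] at h1
    refine h1.trans (le_of_eq ?_)
    rw [div_eq_mul_inv, mul_assoc]
    congr 1
    rw [← pow_mul_pow_sub (s:ℝ) hmn, mul_inv, ← mul_assoc, mul_inv_cancel₀ (by positivity), one_mul]
  -- step 4 : bound on Σ v²
  set b : ℕ → ℝ := fun k => ∑ j : Fin s, Real.sqrt (p j k) with hbdef
  set a : ℕ → ℝ := fun k => ∑ j : Fin s, Real.sqrt (p j k / s) with hadef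
  have hba : ∀ k, b k = Real.sqrt s * a k := by
    intro k
    rw [hbdef, hadef]
    simp only [Finset.mul_sum]
    refine Finset.sum_congr rfl fun j _ => ?_
    rw [Real.sqrt_div (hp0 j k), mul_div_cancel₀ _ (by positivity : Real.sqrt (s:ℝ) ≠ 0)]
  have hsqpow : Real.sqrt ((s:ℝ) ^ (n - m)) = (Real.sqrt (s:ℝ))^(n-m) := by
    induction (n - m) with
    | zero => simp
    | succ k ih => rw [pow_succ, pow_succ, Real.sqrt_mul (by positivity), ih]
  have hrs : r * (Real.sqrt (s:ℝ))^(n-m) = 1 := by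
    rw [hrdef, Real.sqrt_inv, hsqpow]
    exact inv_mul_cancel₀ (by positivity)
  have hQsR : ∀ y, Q y * Real.sqrt (R y)
      = ∏ i : Fin n, (if (i:ℕ) < m then p (y i) (i:ℕ) else Real.sqrt (p (y i) (i:ℕ))) := by
    intro y
    rw [hRdef]
    simp only []
    rw [kak_sqrt_prod _ _ (fun i _ => by split_ifs; exacts [zero_le_one, hp0 _ _])]
    rw [hQdef]
    simp only []
    rw [← Finset.prod_mul_distrib]
    refine Finset.prod_congr rfl fun i _ => ?_
    split_ifs with h
    · rw [Real.sqrt_one, mul_one]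
    · rw [one_mul]
  have conv : ∀ g : ℕ → ℝ, (∏ i : Fin n, (if (i:ℕ) < m then 1 else g (i:ℕ)))
      = ∏ k ∈ Finset.Ico m n, g k := by
    intro g
    rw [Fin.prod_univ_eq_prod_range (fun k => if k < m then 1 else g k) n]
    rw [← Nat.Ico_zero_eq_range, ← Finset.prod_Ico_consecutive _ (Nat.zero_le m) hmn]
    rw [Finset.prod_eq_one (fun k hk => if_pos (Finset.mem_Ico.1 hk).2), one_mul]
    exact Finset.prod_congr rfl fun k hk => if_neg (not_lt.2 (Finset.mem_Ico.1 hk).1)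
  have h1 : ∑ y : (Fin n → Fin s), Q y * R y = 1 := by
    simp_rw [hQR]
    have e := Finset.prod_univ_sum (fun _ : Fin n => (Finset.univ : Finset (Fin s)))
      (fun i j => p j (i:ℕ))
    rw [Fintype.piFinset_univ] at e
    rw [← e]
    simp only [hp1, Finset.prod_const_one]
  have h2 : ∑ y : (Fin n → Fin s), Q y * Real.sqrt (R y) = ∏ k ∈ Finset.Ico m n, b k := by
    simp_rw [hQsR]
    have e := Finset.prod_univ_sum (fun _ : Fin n => (Finset.univ : Finset (Fin s)))
      (fun i j => if (i:ℕ) < m then p j (i:ℕ) else Real.sqrt (p j (i:ℕ)))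
    rw [Fintype.piFinset_univ] at e
    have e2 : ∀ x : Fin n → Fin s, (∏ i : Fin n, if (i:ℕ) < m then p (x i) (i:ℕ)
        else Real.sqrt (p (x i) (i:ℕ))) = ∏ i : Fin n, (fun i j => if (i:ℕ) < m then p j (i:ℕ)
        else Real.sqrt (p j (i:ℕ))) i (x i) := fun x => rfl
    simp_rw [e2]
    rw [← e, ← conv b]
    refine Finset.prod_congr rfl fun i _ => ?_
    by_cases h : (i:ℕ) < m
    · simp only [h, if_true, hp1]
    · simp only [h, if_false, hbdef]
  have h3 : ∑ y : (Fin n → Fin s), Q y = (s:ℝ) ^ (n - m) := by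
    have : ∀ y : Fin n → Fin s, Q y
        = ∏ i : Fin n, (if (i:ℕ) < m then p (y i) (i:ℕ) else 1) := fun y => rfl
    simp_rw [this]
    have e := Finset.prod_univ_sum (fun _ : Fin n => (Finset.univ : Finset (Fin s)))
      (fun i j => if (i:ℕ) < m then p j (i:ℕ) else (1:ℝ))
    rw [Fintype.piFinset_univ] at e
    rw [← e]
    have : (∏ i : Fin n, ∑ j : Fin s, (if (i:ℕ) < m then p j (i:ℕ) else 1))
        = ∏ i : Fin n, (if (i:ℕ) < m then 1 else (s:ℝ)) := by
      refine Finset.prod_congr rfl fun i _ => ?_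
      by_cases h : (i:ℕ) < m
      · simp only [h, if_true, hp1]
      · simp only [h, if_false, Finset.sum_const, Finset.card_univ, Fintype.card_fin,
          nsmul_eq_mul, mul_one]
    rw [this, conv (fun _ => (s:ℝ)), Finset.prod_const, Nat.card_Ico]
  have hIb : ∏ k ∈ Finset.Ico m n, b k
      = (Real.sqrt (s:ℝ))^(n-m) * ∏ k ∈ Finset.Ico m n, a k := by
    rw [← Nat.card_Ico m n, ← Finset.prod_const, ← Finset.prod_mul_distrib]
    exact Finset.prod_congr rfl fun k _ => hba k
  have step4 : ∑ y ∈ S, v y ^ 2 ≤ 2 * (1 - ∏ k ∈ Finset.Ico m n, a k) := by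
    have hexp : ∀ y, v y ^ 2
        = Q y * R y - 2 * r * (Q y * Real.sqrt (R y)) + r^2 * Q y := by
      intro y
      rw [hvdef]
      simp only []
      have e1 : (Real.sqrt (Q y))^2 = Q y := Real.sq_sqrt (hQ0 y)
      have e2 : (Real.sqrt (R y))^2 = R y := Real.sq_sqrt (hR0 y)
      have expand : (Real.sqrt (Q y) * (Real.sqrt (R y) - r)) ^ 2
          = (Real.sqrt (Q y))^2 * (Real.sqrt (R y))^2
            - 2*r*((Real.sqrt (Q y))^2 * Real.sqrt (R y))
            + r^2 * (Real.sqrt (Q y))^2 := by ring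
      rw [expand, e1, e2]
    have hle : ∑ y ∈ S, v y ^ 2 ≤ ∑ y : (Fin n → Fin s), v y ^ 2 :=
      Finset.sum_le_sum_of_subset_of_nonneg (Finset.subset_univ S)
        (fun y _ _ => sq_nonneg _)
    refine hle.trans ?_
    have : ∑ y : (Fin n → Fin s), v y ^ 2
        = (∑ y : (Fin n → Fin s), Q y * R y)
          - 2 * r * (∑ y : (Fin n → Fin s), Q y * Real.sqrt (R y))
          + r^2 * (∑ y : (Fin n → Fin s), Q y) := by
      simp_rw [hexp]
      rw [Finset.sum_add_distrib, Finset.sum_sub_distrib, ← Finset.mul_sum, ← Finset.mul_sum]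
    rw [this, h1, h2, h3, hIb, hr2]
    have hcollapse : 2 * r * ((Real.sqrt (s:ℝ))^(n-m) * ∏ k ∈ Finset.Ico m n, a k)
        = 2 * ∏ k ∈ Finset.Ico m n, a k := by
      rw [mul_assoc 2 r, ← mul_assoc r, hrs, one_mul]
    rw [hcollapse, inv_mul_cancel₀ (by positivity : ((s:ℝ)^(n-m)) ≠ 0)]
    exact le_of_eq (by ring)
  rw [show (∑ y ∈ S, ∏ i : Fin n, p (y i) (i:ℕ)) = ∑ y ∈ S, (u y + v y)^2 from step1]
  refine (kak_minkowski S u v).trans (add_le_add ?_ ?_)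
  · exact Real.sqrt_le_sqrt step3
  · exact Real.sqrt_le_sqrt step4


open Finset MeasureTheory
open scoped ENNReal

def kproj (s n : ℕ) (x : ℕ → Fin s) : Fin n → Fin s := fun i => x i

def kalg (s : ℕ) : Set (Set (ℕ → Fin s)) :=
  {B | ∃ (n : ℕ) (S : Finset (Fin n → Fin s)), B = kproj s n ⁻¹' ↑S}

lemma klift {s n n' : ℕ} (h : n ≤ n') (S : Finset (Fin n → Fin s)) :
    kproj s n ⁻¹' ↑S
      = kproj s n' ⁻¹' ↑(Finset.univ.filter
          (fun y : Fin n' → Fin s => (fun i : Fin n => y (Fin.castLE h i)) ∈ S)) := by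
  ext x
  simp only [Set.mem_preimage, Finset.coe_filter, Set.mem_setOf_eq, Finset.mem_coe,
    Finset.mem_univ, true_and]
  have : (fun i : Fin n => kproj s n' x (Fin.castLE h i)) = kproj s n x := rfl
  rw [this]

lemma kalg_isSetAlgebra (s : ℕ) : MeasureTheory.IsSetAlgebra (kalg s) := by
  constructor
  · exact ⟨0, ∅, by simp⟩
  · rintro B ⟨n, S, rfl⟩
    exact ⟨n, Sᶜ, by rw [Finset.coe_compl, Set.preimage_compl]⟩
  · rintro B C ⟨n, S, rfl⟩ ⟨n', S', rfl⟩
    refine ⟨max n n', ?_, ?_⟩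
    · exact (Finset.univ.filter
          (fun y : Fin (max n n') → Fin s => (fun i : Fin n => y (Fin.castLE (le_max_left n n') i)) ∈ S))
        ∪ (Finset.univ.filter
          (fun y : Fin (max n n') → Fin s => (fun i : Fin n' => y (Fin.castLE (le_max_right n n') i)) ∈ S'))
    · rw [klift (le_max_left n n') S, klift (le_max_right n n') S', Finset.coe_union,
        Set.preimage_union]

lemma kalg_measurableSet {s : ℕ} {B : Set (ℕ → Fin s)} (hB : B ∈ kalg s) :
    MeasurableSet B := by
  obtain ⟨n, S, rfl⟩ := hB
  have hp : Measurable (kproj s n) :=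
    measurable_pi_lambda _ (fun i => measurable_pi_apply _)
  exact hp ((S : Set (Fin n → Fin s)).toFinite.measurableSet)

lemma kalg_generateFrom (s : ℕ) :
    MeasurableSpace.generateFrom (kalg s) = (by infer_instance : MeasurableSpace (ℕ → Fin s)) := by
  refine le_antisymm (MeasurableSpace.generateFrom_le fun B hB => kalg_measurableSet hB) ?_
  rw [MeasurableSpace.pi_eq_generateFrom_projections]
  refine MeasurableSpace.generateFrom_mono ?_
  rintro B ⟨k, A, -, rfl⟩
  classical
  refine ⟨k + 1, Finset.univ.filter (fun y : Fin (k+1) → Fin s => y ⟨k, Nat.lt_succ_self k⟩ ∈ A), ?_⟩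
  ext x
  simp [kproj, Function.eval]

def kext {s : ℕ} (hs : 0 < s) {n : ℕ} (z : Fin n → Fin s) : ℕ → Fin s :=
  fun k => if h : k < n then z ⟨k, h⟩ else ⟨0, hs⟩

lemma kcyl_eq {s : ℕ} (hs : 0 < s) {n : ℕ} (z : Fin n → Fin s) :
    {x : ℕ → Fin s | ∀ k < n, x k = kext hs z k} = kproj s n ⁻¹' {z} := by
  ext x
  simp only [Set.mem_setOf_eq, Set.mem_preimage, Set.mem_singleton_iff]
  constructor
  · intro h
    funext i
    have := h i i.isLt
    rw [kext, dif_pos i.isLt] at this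
    simpa [kproj] using this
  · intro h k hk
    rw [kext, dif_pos hk, ← h]
    rfl

lemma kmeas_preimage {s n : ℕ} (μ : Measure (ℕ → Fin s)) (S : Finset (Fin n → Fin s)) :
    μ (kproj s n ⁻¹' ↑S) = ∑ z ∈ S, μ (kproj s n ⁻¹' {z}) := by
  have h1 : (↑S : Set (Fin n → Fin s)) = ⋃ z ∈ S, {z} :=
    (Set.biUnion_of_singleton _).symm
  rw [h1, Set.preimage_iUnion₂, measure_biUnion_finset]
  · intro z hz z' hz' hne
    exact (Set.disjoint_singleton.2 hne).preimage _
  · intro z hz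
    exact (measurable_pi_lambda _ (fun i => measurable_pi_apply _))
      (Set.toFinite {z}).measurableSet


open MeasureTheory ProbabilityTheory
open scoped ENNReal symmDiff

/-- Kakutani dichotomy consequence: for product measures on `Π k, Fin s` with
uniform reference measure, positivity of the infinite product of Hellinger
affinities implies absolute continuity `μ ≪ ν`. -/
theorem stmt7 (s : ℕ) (hs : 2 ≤ s)
    (p : Fin s → ℕ → ℝ) (hp0 : ∀ j k, 0 ≤ p j k) (hp1 : ∀ k, ∑ j : Fin s, p j k = 1)
    (μ ν : Measure ((k : ℕ) → Fin s))
    [IsProbabilityMeasure μ] [IsProbabilityMeasure ν]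
    (hμ : ∀ (n : ℕ) (y : (k : ℕ) → Fin s),
      μ {x | ∀ k < n, x k = y k} = ∏ k ∈ Finset.range n, ENNReal.ofReal (p (y k) k))
    (hν : ∀ (n : ℕ) (y : (k : ℕ) → Fin s),
      ν {x | ∀ k < n, x k = y k} = ∏ k ∈ Finset.range n, (1 / (s : ℝ≥0∞)))
    (c : ℝ) (hc : 0 < c)
    (hQ : Filter.Tendsto
      (fun N : ℕ => ∏ k ∈ Finset.range N, ∑ j : Fin s, Real.sqrt (p j k / s))
      Filter.atTop (nhds c)) :
    μ ≪ ν := by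
  classical
  have hs0 : 0 < s := by omega
  have hs1 : (1:ℕ) ≤ s := by omega
  have hσ : (0:ℝ) < (s:ℝ) := by exact_mod_cast hs0
  set a : ℕ → ℝ := fun k => ∑ j : Fin s, Real.sqrt (p j k / s) with ha
  set P : ℕ → ℝ := fun N => ∏ k ∈ Finset.range N, a k with hPdef
  have hQ' : Filter.Tendsto P Filter.atTop (nhds c) := hQ
  have ha0 : ∀ k, 0 ≤ a k := fun k => Finset.sum_nonneg fun j _ => Real.sqrt_nonneg _
  have ha1 : ∀ k, a k ≤ 1 := by
    intro k
    have hsq : (a k)^2 ≤ 1 := by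
      have h1 := Finset.sum_mul_sq_le_sq_mul_sq Finset.univ
        (fun j : Fin s => Real.sqrt (p j k / s)) (fun _ => (1:ℝ))
      have h2 : ∑ j : Fin s, (Real.sqrt (p j k / s))^2 = (1:ℝ)/s := by
        have he : ∀ j : Fin s, (Real.sqrt (p j k / s))^2 = p j k / s := fun j =>
          Real.sq_sqrt (div_nonneg (hp0 j k) hσ.le)
        simp_rw [he]
        rw [← Finset.sum_div, hp1 k]
      have h3 : ∑ _j : Fin s, ((1:ℝ))^2 = (s:ℝ) := by simp
      calc (a k)^2 = (∑ j : Fin s, Real.sqrt (p j k / s) * 1)^2 := by simp [ha]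
        _ ≤ (∑ j : Fin s, (Real.sqrt (p j k / s))^2) * (∑ _j : Fin s, ((1:ℝ))^2) := h1
        _ = ((1:ℝ)/s) * s := by rw [h2, h3]
        _ = 1 := by field_simp
    nlinarith [ha0 k, hsq]
  have hPsplit : ∀ {N N' : ℕ}, N ≤ N' → P N' = P N * ∏ k ∈ Finset.Ico N N', a k := by
    intro N N' h
    rw [hPdef]
    simp only []
    rw [← Nat.Ico_zero_eq_range, ← Finset.prod_Ico_consecutive a (Nat.zero_le N) h, Nat.Ico_zero_eq_range]
  have hPle : ∀ {N N' : ℕ}, N ≤ N' → P N' ≤ P N := by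
    intro N N' h
    rw [hPsplit h]
    exact mul_le_of_le_one_right (Finset.prod_nonneg fun k _ => ha0 k)
      (Finset.prod_le_one (fun k _ => ha0 k) (fun k _ => ha1 k))
  have hPc : ∀ N, c ≤ P N := fun N =>
    le_of_tendsto hQ' (Filter.eventually_atTop.2 ⟨N, fun N' h => hPle h⟩)
  have hPpos : ∀ N, 0 < P N := fun N => lt_of_lt_of_le hc (hPc N)
  have hcP1 : ∀ N, c / P N ≤ 1 := fun N => (div_le_one (hPpos N)).2 (hPc N)
  -- cylinder measures
  have hμcyl : ∀ (n : ℕ) (z : Fin n → Fin s),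
      μ (kproj s n ⁻¹' {z}) = ENNReal.ofReal (∏ i : Fin n, p (z i) (i:ℕ)) := by
    intro n z
    rw [← kcyl_eq hs0 z, hμ n (kext hs0 z),
      ← ENNReal.ofReal_prod_of_nonneg (fun k _ => hp0 _ _)]
    congr 1
    rw [← Fin.prod_univ_eq_prod_range (fun k => p (kext hs0 z k) k) n]
    refine Finset.prod_congr rfl fun i _ => ?_
    have : kext hs0 z (i:ℕ) = z i := by rw [kext, dif_pos i.isLt]
    rw [this]
  have hνcyl : ∀ (n : ℕ) (z : Fin n → Fin s),
      ν (kproj s n ⁻¹' {z}) = ((s : ℝ≥0∞))⁻¹ ^ n := by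
    intro n z
    rw [← kcyl_eq hs0 z, hν n (kext hs0 z), Finset.prod_const, Finset.card_range, one_div]
  have hμS : ∀ (n : ℕ) (S : Finset (Fin n → Fin s)),
      μ (kproj s n ⁻¹' ↑S) = ENNReal.ofReal (∑ y ∈ S, ∏ i : Fin n, p (y i) (i:ℕ)) := by
    intro n S
    rw [kmeas_preimage, ENNReal.ofReal_sum_of_nonneg
      (fun y _ => Finset.prod_nonneg fun i _ => hp0 _ _)]
    exact Finset.sum_congr rfl fun z _ => hμcyl n z
  have hνS : ∀ (n : ℕ) (S : Finset (Fin n → Fin s)),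
      ν (kproj s n ⁻¹' ↑S) = (S.card : ℝ≥0∞) * ((s : ℝ≥0∞))⁻¹ ^ n := by
    intro n S
    rw [kmeas_preimage]
    simp only [hνcyl, Finset.sum_const, nsmul_eq_mul]
  have hνSr : ∀ (n : ℕ) (S : Finset (Fin n → Fin s)),
      (ν (kproj s n ⁻¹' ↑S)).toReal = (S.card : ℝ) * ((s:ℝ)^n)⁻¹ := by
    intro n S
    rw [hνS]
    simp [ENNReal.toReal_mul, ENNReal.toReal_pow, ENNReal.toReal_inv, inv_pow]
  -- master inequality
  have master : ∀ (m : ℕ) (B : Set (ℕ → Fin s)), B ∈ kalg s →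
      (μ B).toReal ≤ (Real.sqrt ((s:ℝ)^m * (ν B).toReal)
        + Real.sqrt (2 * (1 - c / P m)))^2 := by
    intro m B hB
    obtain ⟨n, S, rfl⟩ := hB
    rw [klift (le_max_left n m) S]
    set n' := max n m with hn'
    set S' := Finset.univ.filter
      (fun y : Fin n' → Fin s => (fun i : Fin n => y (Fin.castLE (le_max_left n m) i)) ∈ S) with hS'
    have hmn' : m ≤ n' := le_max_right n m
    have hsum0 : (0:ℝ) ≤ ∑ y ∈ S', ∏ i : Fin n', p (y i) (i:ℕ) :=
      Finset.sum_nonneg fun y _ => Finset.prod_nonneg fun i _ => hp0 _ _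
    rw [hμS, ENNReal.toReal_ofReal hsum0, hνSr]
    have hkey := kak_key s hs1 p hp0 hp1 m n' hmn' S'
    have hIco : c / P m ≤ ∏ k ∈ Finset.Ico m n', a k := by
      have := hPsplit hmn'
      rw [div_le_iff₀ (hPpos m)]
      calc c ≤ P n' := hPc n'
        _ = P m * ∏ k ∈ Finset.Ico m n', a k := this
        _ = (∏ k ∈ Finset.Ico m n', a k) * P m := by ring
    have hstep : Real.sqrt (∑ y ∈ S', ∏ i : Fin n', p (y i) (i:ℕ))
        ≤ Real.sqrt ((s:ℝ)^m * ((S'.card : ℝ) * ((s:ℝ)^n')⁻¹))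
          + Real.sqrt (2 * (1 - c / P m)) := by
      refine hkey.trans (add_le_add ?_ ?_)
      · apply Real.sqrt_le_sqrt
        apply le_of_eq
        field_simp
      · apply Real.sqrt_le_sqrt
        have : (1:ℝ) - ∏ k ∈ Finset.Ico m n', a k ≤ 1 - c / P m := by linarith [hIco]
        linarith
    calc (∑ y ∈ S', ∏ i : Fin n', p (y i) (i:ℕ))
        = (Real.sqrt (∑ y ∈ S', ∏ i : Fin n', p (y i) (i:ℕ)))^2 := (Real.sq_sqrt hsum0).symm
      _ ≤ _ := pow_le_pow_left₀ (Real.sqrt_nonneg _) hstep 2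
  -- measure-dense approximation
  have hdense : (μ + ν).MeasureDense (kalg s) :=
    Measure.MeasureDense.of_generateFrom_isSetAlgebra_finite (μ + ν)
      (kalg_isSetAlgebra s) (kalg_generateFrom s).symm
  -- final argument
  refine Measure.AbsolutelyContinuous.mk fun A hAm hA0 => ?_
  have hfin : ∀ m : ℕ, (μ A).toReal ≤ 2 * (1 - c / P m) := by
    intro m
    have hE0 : (0:ℝ) ≤ 2 * (1 - c / P m) := by
      have := hcP1 m; linarith
    have hbound : ∀ ε : ℝ, 0 < ε →
        (μ A).toReal ≤ (Real.sqrt ((s:ℝ)^m * ε)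
          + Real.sqrt (2 * (1 - c / P m)))^2 + ε := by
      intro ε hε
      obtain ⟨B, hB, hd⟩ := hdense.approx A hAm (measure_ne_top _ _) ε hε
      have hBm : MeasurableSet B := kalg_measurableSet hB
      have hμd : μ (A ∆ B) ≤ ENNReal.ofReal ε := by
        refine le_trans ?_ hd.le
        rw [Measure.add_apply]; exact le_self_add
      have hνd : ν (A ∆ B) ≤ ENNReal.ofReal ε := by
        refine le_trans ?_ hd.le
        rw [Measure.add_apply]; exact le_add_self
      have hAB : μ A ≤ μ B + ENNReal.ofReal ε := by
        calc μ A ≤ μ (B ∪ A ∆ B) := by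
              refine measure_mono fun x hx => ?_
              by_cases hxB : x ∈ B
              · exact Or.inl hxB
              · exact Or.inr (Set.mem_symmDiff.2 (Or.inl ⟨hx, hxB⟩))
          _ ≤ μ B + μ (A ∆ B) := measure_union_le _ _
          _ ≤ μ B + ENNReal.ofReal ε := add_le_add_right hμd _
      have hνB : ν B ≤ ENNReal.ofReal ε := by
        calc ν B ≤ ν (A ∪ A ∆ B) := by
              refine measure_mono fun x hx => ?_
              by_cases hxA : x ∈ A
              · exact Or.inl hxA
              · exact Or.inr (Set.mem_symmDiff.2 (Or.inr ⟨hx, hxA⟩))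
          _ ≤ ν A + ν (A ∆ B) := measure_union_le _ _
          _ = ν (A ∆ B) := by rw [hA0, zero_add]
          _ ≤ _ := hνd
      have hνBr : (ν B).toReal ≤ ε := by
        have h := ENNReal.toReal_mono ENNReal.ofReal_ne_top hνB
        rwa [ENNReal.toReal_ofReal hε.le] at h
      have hμBr := master m B hB
      have hmono : (Real.sqrt ((s:ℝ)^m * (ν B).toReal) + Real.sqrt (2*(1 - c/P m)))^2
          ≤ (Real.sqrt ((s:ℝ)^m * ε) + Real.sqrt (2*(1 - c/P m)))^2 := by
        refine pow_le_pow_left₀ (by positivity) (add_le_add_left (Real.sqrt_le_sqrt ?_) _) 2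
        exact mul_le_mul_of_nonneg_left hνBr (pow_nonneg hσ.le m)
      have hμAr : (μ A).toReal ≤ (μ B).toReal + ε := by
        have h2 := ENNReal.toReal_mono
          (by exact ENNReal.add_ne_top.2 ⟨measure_ne_top μ B, ENNReal.ofReal_ne_top⟩) hAB
        rwa [ENNReal.toReal_add (measure_ne_top μ B) ENNReal.ofReal_ne_top,
          ENNReal.toReal_ofReal hε.le] at h2
      linarith [hμBr, hmono, hμAr]
    have hcontf : Continuous (fun ε : ℝ =>
        (Real.sqrt ((s:ℝ)^m * ε) + Real.sqrt (2*(1 - c/P m)))^2 + ε) := by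
      have h1 : Continuous fun ε : ℝ => (s:ℝ)^m * ε := continuous_const.mul continuous_id
      exact (((Real.continuous_sqrt.comp h1).add continuous_const).pow 2).add continuous_id
    have hcont : Filter.Tendsto (fun ε : ℝ =>
        (Real.sqrt ((s:ℝ)^m * ε) + Real.sqrt (2*(1 - c/P m)))^2 + ε)
        (nhdsWithin 0 (Set.Ioi 0)) (nhds (2*(1 - c/P m))) := by
      have h0 : ((Real.sqrt ((s:ℝ)^m * 0) + Real.sqrt (2*(1-c/P m)))^2 + 0)
          = 2*(1-c/P m) := by
        rw [mul_zero, Real.sqrt_zero, zero_add, Real.sq_sqrt hE0, add_zero]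
      have ht := hcontf.tendsto 0
      rw [h0] at ht
      exact ht.mono_left nhdsWithin_le_nhds
    exact ge_of_tendsto hcont (Filter.eventually_of_mem self_mem_nhdsWithin
      (fun ε hε => hbound ε hε))
  have hlim0 : Filter.Tendsto (fun m => 2*(1 - c / P m)) Filter.atTop (nhds 0) := by
    have h1 : Filter.Tendsto (fun m => c / P m) Filter.atTop (nhds (c/c)) :=
      Filter.Tendsto.div tendsto_const_nhds hQ' (ne_of_gt hc)
    rw [div_self (ne_of_gt hc)] at h1
    have h2 : Filter.Tendsto (fun m => (1:ℝ) - c / P m) Filter.atTop (nhds 0) := by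
      have := (tendsto_const_nhds (x := (1:ℝ)) (f := Filter.atTop (α := ℕ))).sub h1
      simpa using this
    have h3 := h2.const_mul 2
    simpa using h3
  have hle0 : (μ A).toReal ≤ 0 := ge_of_tendsto hlim0 (Filter.Eventually.of_forall hfin)
  have h00 : (μ A).toReal = 0 := le_antisymm hle0 ENNReal.toReal_nonneg
  exact ((ENNReal.toReal_eq_zero_iff _).1 h00).resolve_right (measure_ne_top μ A)
end

section
/- Singularity criterion: let s ≥ 2, let ψ = Σ_{k=1}^∞ ψ_k / s^k where (ψ_k) are independent, ψ_k takes nonnegative integer values d_{0k} < ... < d_{(s-1)k} ≤ L with probabilities p_{0k},...,p_{(s-1)k}. If Π_{n=1}^∞ max_j p_{jn} = 0 and Π_{n=1}^∞ Σ_{j=0}^{s-1} √(p_{jn}/s) = 0, then the law of ψ is not absolutely continuous with respect to Lebesgue measure. -/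
open MeasureTheory ProbabilityTheory

private lemma sum_rpow_half_le {ι : Type*} (t : Finset ι) (f : ι → ENNReal) :
    (∑ i ∈ t, f i) ^ (2⁻¹ : ℝ) ≤ ∑ i ∈ t, (f i) ^ (2⁻¹ : ℝ) := by
  classical
  induction t using Finset.induction with
  | empty => simp
  | insert _ _ ha ih =>
    rename_i a t
    rw [Finset.sum_insert ha, Finset.sum_insert ha]
    calc (f a + ∑ i ∈ t, f i) ^ (2⁻¹:ℝ) ≤ f a ^ (2⁻¹:ℝ) + (∑ i ∈ t, f i) ^ (2⁻¹:ℝ) :=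
      ENNReal.rpow_add_le_add_rpow _ _ (by norm_num) (by norm_num)
    _ ≤ _ := by gcongr

private lemma lintegral_biUnion_finset_le {μ : Measure ℝ} (t : Finset ℕ) (S : ℕ → Set ℝ)
    (g : ℝ → ENNReal) :
    ∫⁻ x in ⋃ m ∈ t, S m, g x ∂μ ≤ ∑ m ∈ t, ∫⁻ x in S m, g x ∂μ := by
  classical
  induction t using Finset.induction with
  | empty => simp
  | insert _ _ ha ih =>
    rename_i a t
    rw [Finset.sum_insert ha, Finset.set_biUnion_insert]
    exact (lintegral_union_le _ _ _).trans (by gcongr)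


set_option maxHeartbeats 1000000 in
/-- Singularity criterion: if `W = Π_n max_j p_{jn} = 0` and
`Q = Π_n Σ_j √(p_{jn}/s) = 0`, then the law of `ψ = Σ ψ_k s^{-k}` is not
absolutely continuous with respect to Lebesgue measure. -/
theorem stmt11 {Ω : Type*} [MeasureSpace Ω] [IsProbabilityMeasure (ℙ : Measure Ω)]
    (s : ℕ) (hs : 2 ≤ s) (L : ℝ) (hL : 0 < L)
    (d : Fin s → ℕ → ℤ)
    (hmono : ∀ n : ℕ, StrictMono (fun j : Fin s => d j n))
    (hzero : ∀ n : ℕ, d ⟨0, by omega⟩ n = 0)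
    (hbd : ∀ (j : Fin s) (n : ℕ), (d j n : ℝ) ≤ L)
    (p : Fin s → ℕ → ℝ) (hp0 : ∀ j k, 0 ≤ p j k) (hp1 : ∀ k, ∑ j : Fin s, p j k = 1)
    (ψk : ℕ → Ω → ℝ) (hmeas : ∀ k, Measurable (ψk k))
    (hindep : iIndepFun ψk (ℙ : Measure Ω))
    (hval : ∀ (j : Fin s) (k : ℕ),
      (ℙ : Measure Ω) {ω | ψk k ω = (d j k : ℝ)} = ENNReal.ofReal (p j k))
    (hrange : ∀ (k : ℕ) (ω : Ω), ∃ j : Fin s, ψk k ω = (d j k : ℝ))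
    (hW : Filter.Tendsto
      (fun N : ℕ => ∏ n ∈ Finset.range N, ⨆ j : Fin s, p j n)
      Filter.atTop (nhds 0))
    (hQ : Filter.Tendsto
      (fun N : ℕ => ∏ n ∈ Finset.range N, ∑ j : Fin s, Real.sqrt (p j n / s))
      Filter.atTop (nhds 0))
    (ψ : Ω → ℝ) (hψ : ∀ ω, ψ ω = ∑' k : ℕ, ψk k ω / (s : ℝ) ^ (k + 1)) :
    ¬ (Measure.map ψ (ℙ : Measure Ω) ≪ volume) := by
  classical
  intro habs
  set sr : ℝ := (s : ℝ) with hsr_def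
  have hsr2 : (2:ℝ) ≤ sr := by rw [hsr_def]; exact_mod_cast hs
  have hsr0 : (0:ℝ) < sr := by linarith
  have hsrinv : sr⁻¹ < 1 := by
    rw [inv_lt_one_iff₀]; right; linarith
  have hsrinv0 : (0:ℝ) ≤ sr⁻¹ := by positivity
  set j0 : Fin s := ⟨0, by omega⟩ with hj0_def
  -- digits are nonnegative
  have hd0 : ∀ (j : Fin s) (n : ℕ), (0:ℝ) ≤ (d j n : ℝ) := by
    intro j n
    have : d j0 n ≤ d j n := (hmono n).monotone (by simp [hj0_def, Fin.le_def])
    rw [hzero n] at this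
    exact_mod_cast this
  -- values of ψk
  have hψk0 : ∀ k ω, 0 ≤ ψk k ω := by
    intro k ω; obtain ⟨j, hj⟩ := hrange k ω; rw [hj]; exact hd0 j k
  have hψkL : ∀ k ω, ψk k ω ≤ L := by
    intro k ω; obtain ⟨j, hj⟩ := hrange k ω; rw [hj]; exact hbd j k
  -- summability
  have hgeo : Summable (fun k : ℕ => L * sr⁻¹ ^ (k+1)) := by
    have := (summable_geometric_of_lt_one hsrinv0 hsrinv).mul_left (L * sr⁻¹)
    refine this.congr fun k => ?_
    ring
  have hterm_eq : ∀ ω k, ψk k ω / sr ^ (k+1) = ψk k ω * sr⁻¹ ^ (k+1) := by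
    intro ω k; rw [div_eq_mul_inv, inv_pow]
  have hsummable : ∀ ω, Summable (fun k : ℕ => ψk k ω / sr ^ (k+1)) := by
    intro ω
    refine Summable.of_nonneg_of_le (fun k => div_nonneg (hψk0 k ω) (by positivity)) (fun k => ?_) hgeo
    rw [hterm_eq]
    exact mul_le_mul_of_nonneg_right (hψkL k ω) (by positivity)
  -- measurability of ψ
  have hψ_meas : Measurable ψ := by
    have hfun : ∀ ω, Filter.Tendsto (fun n => ∑ k ∈ Finset.range n, ψk k ω / sr ^ (k+1))
        Filter.atTop (nhds (ψ ω)) := by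
      intro ω; rw [hψ ω]; exact (hsummable ω).hasSum.tendsto_sum_nat
    exact measurable_of_tendsto_metrizable
      (fun n => Finset.measurable_sum _ fun k _ => ((hmeas k).div_const _))
      (tendsto_pi_nhds.mpr hfun)
  -- geometric tail bound
  have hgeo_tail : ∀ n : ℕ, ∑' k : ℕ, L * sr⁻¹ ^ ((k+n)+1) ≤ L / sr ^ n := by
    intro n
    have h1 : ∀ k : ℕ, L * sr⁻¹ ^ ((k+n)+1) = (L * sr⁻¹^(n+1)) * sr⁻¹ ^ k := by
      intro k; ring
    rw [tsum_congr h1, tsum_mul_left, tsum_geometric_of_lt_one hsrinv0 hsrinv]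
    rw [div_eq_mul_inv, ← inv_pow]
    have h2 : (1 - sr⁻¹)⁻¹ ≤ sr := by
      rw [inv_le_comm₀ (by rw [sub_pos]; linarith) hsr0]
      have : (2:ℝ)⁻¹ ≥ sr⁻¹ := by
        apply inv_anti₀ <;> linarith
      linarith
    calc L * sr⁻¹^(n+1) * (1-sr⁻¹)⁻¹ ≤ L * sr⁻¹^(n+1) * sr := by
          apply mul_le_mul_of_nonneg_left h2 (by positivity)
      _ = L * sr⁻¹ ^ n := by
          rw [pow_succ]; field_simp
      _ = L * (sr⁻¹)^n := rfl
  have htail_le : ∀ ω (n : ℕ), ∑' k : ℕ, ψk (k+n) ω / sr ^ ((k+n)+1) ≤ L / sr ^ n := by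
    intro ω n
    refine le_trans (Summable.tsum_le_tsum (fun k => ?_) ((hsummable ω).comp_injective
      (add_left_injective n)) (by
        have := hgeo.comp_injective (add_left_injective n)
        exact this)) (hgeo_tail n)
    rw [hterm_eq]
    exact mul_le_mul_of_nonneg_right (hψkL _ ω) (by positivity)
  have htail_nonneg : ∀ ω (n : ℕ), 0 ≤ ∑' k : ℕ, ψk (k+n) ω / sr ^ ((k+n)+1) :=
    fun ω n => tsum_nonneg (fun k => by
      have := hψk0 (k+n) ω; positivity)
  have hsplit : ∀ ω (n : ℕ), ψ ω = (∑ k ∈ Finset.range n, ψk k ω / sr ^ (k+1))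
      + ∑' k : ℕ, ψk (k+n) ω / sr ^ ((k+n)+1) := by
    intro ω n
    rw [hψ ω]
    exact (Summable.sum_add_tsum_nat_add n (hsummable ω)).symm
  -- bounds on ψ
  have hψ0 : ∀ ω, 0 ≤ ψ ω := by
    intro ω; rw [hψ ω]
    exact tsum_nonneg fun k => by have := hψk0 k ω; positivity
  have hψL : ∀ ω, ψ ω ≤ L := by
    intro ω
    have := hsplit ω 0
    simp only [Finset.range_zero, Finset.sum_empty, zero_add] at this
    rw [this]
    simpa using htail_le ω 0
  -- measure-theoretic setup
  set μ : Measure ℝ := Measure.map ψ (ℙ : Measure Ω) with hμ_def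
  haveI hprob : IsProbabilityMeasure μ := Measure.isProbabilityMeasure_map hψ_meas.aemeasurable
  set f : ℝ → ENNReal := μ.rnDeriv volume with hf_def
  have hf_meas : Measurable f := Measure.measurable_rnDeriv μ volume
  have hfd : volume.withDensity f = μ := Measure.withDensity_rnDeriv_eq μ volume habs
  set g : ℝ → ENNReal := fun x => f x ^ (2⁻¹:ℝ) with hg_def
  have hg_meas : Measurable g := ENNReal.continuous_rpow_const.measurable.comp hf_meas
  set F : ℕ := Nat.floor L with hF_def
  set B : ℕ := F + 1 with hB_def
  have hLB : L < (B:ℝ) := by rw [hB_def]; push_cast; exact Nat.lt_floor_add_one L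
  -- the key estimate
  have key : ∀ n : ℕ, (∫⁻ x in Set.Ico (0:ℝ) (B:ℝ), g x) ≤
      (B : ENNReal) * ENNReal.ofReal
        (∏ k ∈ Finset.range n, ∑ j : Fin s, Real.sqrt (p j k / sr)) := by
    intro n
    have hsrne : sr ≠ 0 := ne_of_gt hsr0
    set t : ℝ := sr ^ n with ht_def
    have ht0 : (0:ℝ) < t := by positivity
    set M : ℕ := B * s ^ n with hM_def
    have hMr : (M:ℝ) = (B:ℝ) * t := by rw [hM_def, ht_def, hsr_def]; push_cast; ring
    set I : ℕ → Set ℝ := fun m => Set.Ico ((m:ℝ) / t) (((m:ℝ)+1) / t) with hI_def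
    set ce : (Fin n → Fin s) → ℕ → Fin s :=
      fun c k => if h : k < n then c ⟨k, h⟩ else j0 with hce_def
    set A : (Fin n → Fin s) → Set Ω :=
      fun c => ⋂ k ∈ Finset.range n, ψk k ⁻¹' {((d (ce c k) k : ℤ) : ℝ)} with hA_def
    -- measure of cylinders via independence
    have hAmeas : ∀ c, (ℙ : Measure Ω) (A c)
        = ∏ k ∈ Finset.range n, ENNReal.ofReal (p (ce c k) k) := by
      intro c
      rw [hA_def]
      rw [hindep.meas_biInter
        (fun k _ => ⟨{((d (ce c k) k : ℤ) : ℝ)}, measurableSet_singleton _, rfl⟩)]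
      refine Finset.prod_congr rfl fun k _ => ?_
      rw [← hval (ce c k) k]
      rfl
    -- left endpoint of the cylinder image
    set a : (Fin n → Fin s) → ℝ :=
      fun c => ∑ k ∈ Finset.range n, ((d (ce c k) k : ℤ) : ℝ) / sr ^ (k+1) with ha_def
    have hψA : ∀ c, ∀ ω ∈ A c, a c ≤ ψ ω ∧ ψ ω ≤ a c + L / t := by
      intro c ω hω
      have hmem : ∀ k ∈ Finset.range n, ψk k ω = ((d (ce c k) k : ℤ) : ℝ) := by
        intro k hk
        exact Set.mem_iInter₂.mp hω k hk
      have hpart : (∑ k ∈ Finset.range n, ψk k ω / sr ^ (k+1)) = a c := by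
        rw [ha_def]; exact Finset.sum_congr rfl fun k hk => by rw [hmem k hk]
      have hsp := hsplit ω n
      rw [hpart] at hsp
      constructor
      · rw [hsp]; linarith [htail_nonneg ω n]
      · rw [hsp, ht_def]; linarith [htail_le ω n]
    -- integer left endpoint
    set N : (Fin n → Fin s) → ℕ :=
      fun c => ∑ k ∈ Finset.range n, (d (ce c k) k).toNat * s ^ (n - (k+1)) with hN_def
    have hNa : ∀ c, (N c : ℝ) = a c * t := by
      intro c
      rw [hN_def, ha_def, Finset.sum_mul, Nat.cast_sum]
      refine Finset.sum_congr rfl fun k hk => ?_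
      have hk' := Finset.mem_range.mp hk
      have hdnn : (0:ℤ) ≤ d (ce c k) k := by exact_mod_cast hd0 (ce c k) k
      have hd : (((d (ce c k) k).toNat : ℕ) : ℝ) = ((d (ce c k) k : ℤ) : ℝ) := by
        exact_mod_cast Int.toNat_of_nonneg hdnn
      have hpow : sr ^ (n - (k+1)) * sr ^ (k+1) = sr ^ n := by
        rw [← pow_add]; congr 1; omega
      rw [Nat.cast_mul, Nat.cast_pow, ← hsr_def, hd, ht_def, ← hpow]
      field_simp
    -- the cylinders cover Ω
    set Cyls := Fintype.piFinset (fun _ : Fin n => (Finset.univ : Finset (Fin s))) with hCyls_def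
    have hcover : (Set.univ : Set Ω) ⊆ ⋃ c ∈ Cyls, A c := by
      intro ω _
      set c : Fin n → Fin s := fun i => Classical.choose (hrange i.val ω) with hc_def
      have hcA : ω ∈ A c := by
        rw [hA_def]
        refine Set.mem_iInter₂.mpr fun k hk => ?_
        have hk' := Finset.mem_range.mp hk
        simp only [Set.mem_preimage, Set.mem_singleton_iff, hce_def, hk', dif_pos, hc_def]
        exact Classical.choose_spec (hrange k ω)
      exact Set.mem_biUnion (Fintype.mem_piFinset.mpr fun i => Finset.mem_univ (c i)) hcA
    -- each cylinder meets few intervals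
    have hempty : ∀ c m, m ∉ Finset.Icc (N c) (N c + F) → A c ∩ ψ ⁻¹' (I m) = ∅ := by
      intro c m hm
      rw [Set.eq_empty_iff_forall_notMem]
      rintro ω ⟨hωA, hωI⟩
      have hb := hψA c ω hωA
      have hI' := Set.mem_Ico.mp hωI
      have hNle : N c ≤ m := by
        have h1 : a c < ((m:ℝ)+1)/t := lt_of_le_of_lt hb.1 hI'.2
        have h2 : a c * t < (m:ℝ)+1 := (lt_div_iff₀ ht0).mp h1
        rw [← hNa c] at h2
        have h3 : (N c : ℝ) < ((m+1 : ℕ) : ℝ) := by push_cast; linarith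
        have h4 : N c < m + 1 := by exact_mod_cast h3
        omega
      have hmle : m ≤ N c + F := by
        have h1 : (m:ℝ)/t ≤ a c + L/t := le_trans hI'.1 hb.2
        have h2 := mul_le_mul_of_nonneg_right h1 ht0.le
        rw [div_mul_cancel₀ _ (ne_of_gt ht0), add_mul,
          div_mul_cancel₀ _ (ne_of_gt ht0), ← hNa c] at h2
        have h3 : (m:ℝ) < (N c:ℝ) + (F:ℝ) + 1 := by
          have : L < (F:ℝ) + 1 := by exact_mod_cast Nat.lt_floor_add_one L
          linarith
        have h4 : m < N c + F + 1 := by exact_mod_cast h3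
        omega
      exact hm (Finset.mem_Icc.mpr ⟨hNle, hmle⟩)
    -- Cauchy-Schwarz on each interval
    have hCS : ∀ m : ℕ, (∫⁻ x in I m, g x) ≤
        μ (I m) ^ (2⁻¹:ℝ) * ENNReal.ofReal (1/t) ^ (2⁻¹:ℝ) := by
      intro m
      have hconj : Real.HolderConjugate 2 2 := Real.HolderConjugate.two_two
      have hCS0 := ENNReal.lintegral_mul_le_Lp_mul_Lq (volume.restrict (I m)) hconj
        hg_meas.aemeasurable (aemeasurable_const (b := (1:ENNReal)))
      simp only [Pi.mul_apply, mul_one] at hCS0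
      have hg2 : ∀ x, g x ^ (2:ℝ) = f x := by
        intro x
        rw [hg_def]
        rw [← ENNReal.rpow_mul]
        norm_num
      have hμeq : (∫⁻ x in I m, g x ^ (2:ℝ)) = μ (I m) := by
        rw [lintegral_congr (fun x => hg2 x), ← hfd,
          withDensity_apply _ measurableSet_Ico]
      have hone : (∫⁻ _x in I m, (1:ENNReal) ^ (2:ℝ)) = ENNReal.ofReal (1/t) := by
        simp only [ENNReal.one_rpow]
        rw [setLIntegral_one]
        rw [hI_def]
        rw [Real.volume_Ico]
        rw [div_sub_div_same, add_sub_cancel_left]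
      rw [hμeq, hone] at hCS0
      simpa [one_div] using hCS0
    set e : (Fin n → Fin s) → ℕ → ENNReal :=
      fun c m => (ℙ : Measure Ω) (A c ∩ ψ ⁻¹' (I m)) with he_def
    have hμI : ∀ m, μ (I m) ≤ ∑ c ∈ Cyls, e c m := by
      intro m
      rw [hμ_def, Measure.map_apply hψ_meas measurableSet_Ico]
      have hsub : ψ ⁻¹' (I m) ⊆ ⋃ c ∈ Cyls, (A c ∩ ψ ⁻¹' (I m)) := by
        intro ω hω
        obtain ⟨c, hc, hcA⟩ := Set.mem_iUnion₂.mp (hcover (Set.mem_univ ω))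
        exact Set.mem_iUnion₂.mpr ⟨c, hc, hcA, hω⟩
      exact le_trans (measure_mono hsub) (measure_biUnion_finset_le _ _)
    have hinner : ∀ c, (∑ m ∈ Finset.range M, (e c m) ^ (2⁻¹:ℝ)) ≤
        (B:ENNReal) * ((ℙ : Measure Ω) (A c)) ^ (2⁻¹:ℝ) := by
      intro c
      have hzero' : ∀ m ∈ Finset.range M,
          m ∉ Finset.range M ∩ Finset.Icc (N c) (N c + F) → (e c m) ^ (2⁻¹:ℝ) = 0 := by
        intro m hm hmn
        have hm2 : m ∉ Finset.Icc (N c) (N c + F) :=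
          fun h => hmn (Finset.mem_inter.mpr ⟨hm, h⟩)
        rw [he_def]
        simp only [hempty c m hm2, measure_empty]
        exact ENNReal.zero_rpow_of_pos (by norm_num)
      rw [← Finset.sum_subset Finset.inter_subset_left hzero']
      calc ∑ m ∈ Finset.range M ∩ Finset.Icc (N c) (N c + F), (e c m) ^ (2⁻¹:ℝ)
          ≤ ∑ _m ∈ Finset.Icc (N c) (N c + F), ((ℙ : Measure Ω) (A c)) ^ (2⁻¹:ℝ) := by
            refine le_trans (Finset.sum_le_sum fun m _ => ?_)
              (Finset.sum_le_sum_of_subset Finset.inter_subset_right)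
            exact ENNReal.rpow_le_rpow (measure_mono Set.inter_subset_left) (by norm_num)
        _ = (B:ENNReal) * ((ℙ : Measure Ω) (A c)) ^ (2⁻¹:ℝ) := by
            rw [Finset.sum_const, Nat.card_Icc,
              show N c + F + 1 - N c = B from by omega, nsmul_eq_mul]
    -- main chain
    calc (∫⁻ x in Set.Ico (0:ℝ) (B:ℝ), g x)
        ≤ ∫⁻ x in ⋃ m ∈ Finset.range M, I m, g x := by
          refine lintegral_mono' (Measure.restrict_mono ?_ le_rfl) le_rfl
          rintro x ⟨hx0, hxB⟩
          have hxt0 : (0:ℝ) ≤ x * t := by positivity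
          have hmM : Nat.floor (x*t) ∈ Finset.range M := by
            refine Finset.mem_range.mpr ?_
            have h1 : x * t < (B:ℝ) * t := mul_lt_mul_of_pos_right hxB ht0
            have h2 : (Nat.floor (x*t) : ℝ) ≤ x * t := Nat.floor_le hxt0
            have h3 : ((Nat.floor (x*t)):ℝ) < (M:ℝ) := by rw [hMr]; linarith
            exact_mod_cast h3
          have hxI : x ∈ I (Nat.floor (x*t)) := by
            refine Set.mem_Ico.mpr ⟨?_, ?_⟩
            · rw [div_le_iff₀ ht0]
              exact Nat.floor_le hxt0
            · rw [lt_div_iff₀ ht0]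
              exact Nat.lt_floor_add_one (x*t)
          exact Set.mem_biUnion hmM hxI
      _ ≤ ∑ m ∈ Finset.range M, ∫⁻ x in I m, g x := lintegral_biUnion_finset_le _ _ _
      _ ≤ ∑ m ∈ Finset.range M, μ (I m) ^ (2⁻¹:ℝ) * ENNReal.ofReal (1/t) ^ (2⁻¹:ℝ) :=
          Finset.sum_le_sum fun m _ => hCS m
      _ ≤ ∑ m ∈ Finset.range M, (∑ c ∈ Cyls, (e c m) ^ (2⁻¹:ℝ)) * ENNReal.ofReal (1/t) ^ (2⁻¹:ℝ) := by
          refine Finset.sum_le_sum fun m _ => mul_le_mul_left ?_ _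
          exact le_trans (ENNReal.rpow_le_rpow (hμI m) (by norm_num)) (sum_rpow_half_le _ _)
      _ = ∑ c ∈ Cyls, ∑ m ∈ Finset.range M, (e c m) ^ (2⁻¹:ℝ) * ENNReal.ofReal (1/t) ^ (2⁻¹:ℝ) := by
          simp_rw [Finset.sum_mul]
          rw [Finset.sum_comm]
      _ ≤ ∑ c ∈ Cyls, ((B:ENNReal) * ((ℙ : Measure Ω) (A c)) ^ (2⁻¹:ℝ)) * ENNReal.ofReal (1/t) ^ (2⁻¹:ℝ) := by
          refine Finset.sum_le_sum fun c _ => ?_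
          rw [← Finset.sum_mul]
          exact mul_le_mul_left (hinner c) _
      _ = (B:ENNReal) * ∑ c ∈ Cyls, (((ℙ : Measure Ω) (A c)) * ENNReal.ofReal (1/t)) ^ (2⁻¹:ℝ) := by
          rw [Finset.mul_sum]
          refine Finset.sum_congr rfl fun c _ => ?_
          rw [ENNReal.mul_rpow_of_nonneg _ _ (by norm_num)]
          ring
      _ = (B:ENNReal) * ENNReal.ofReal
          (∏ k ∈ Finset.range n, ∑ j : Fin s, Real.sqrt (p j k / sr)) := by
          congr 1
          set G : Fin n → Fin s → ENNReal :=
            fun i j => ENNReal.ofReal (Real.sqrt (p j i.val / sr)) with hG_def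
          have hstep1 : ∀ c, ((ℙ : Measure Ω) (A c) * ENNReal.ofReal (1/t)) ^ (2⁻¹:ℝ)
              = ∏ k ∈ Finset.range n, ENNReal.ofReal (Real.sqrt (p (ce c k) k / sr)) := by
            intro c
            have h1t : (1/t) = (1/sr)^n := by
              rw [ht_def, one_div, one_div, inv_pow]
            have hconst : (ENNReal.ofReal (1/sr))^n
                = ∏ _k ∈ Finset.range n, ENNReal.ofReal (1/sr) := by
              rw [Finset.prod_const, Finset.card_range]
            have hprod : (ℙ : Measure Ω) (A c) * ENNReal.ofReal (1/t)
                = ∏ k ∈ Finset.range n, ENNReal.ofReal (p (ce c k) k / sr) := by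
              rw [hAmeas c, h1t, ENNReal.ofReal_pow (by positivity : (0:ℝ) ≤ 1/sr),
                hconst, ← Finset.prod_mul_distrib]
              refine Finset.prod_congr rfl fun k _ => ?_
              rw [← ENNReal.ofReal_mul (hp0 _ _), mul_one_div]
            rw [hprod, ← ENNReal.prod_rpow_of_nonneg (by norm_num : (0:ℝ) ≤ 2⁻¹)]
            refine Finset.prod_congr rfl fun k _ => ?_
            rw [ENNReal.ofReal_rpow_of_nonneg (div_nonneg (hp0 _ _) hsr0.le) (by norm_num)]
            congr 1
            rw [Real.sqrt_eq_rpow]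
            norm_num
          have hfin : ∀ c : Fin n → Fin s,
              (∏ k ∈ Finset.range n, ENNReal.ofReal (Real.sqrt (p (ce c k) k / sr)))
              = ∏ i : Fin n, G i (c i) := by
            intro c
            rw [← Fin.prod_univ_eq_prod_range
              (fun k => ENNReal.ofReal (Real.sqrt (p (ce c k) k / sr))) n]
            refine Finset.prod_congr rfl fun i _ => ?_
            rw [hG_def, hce_def]
            simp only [i.isLt, dif_pos, Fin.eta]
          calc (∑ c ∈ Cyls, ((ℙ : Measure Ω) (A c) * ENNReal.ofReal (1/t)) ^ (2⁻¹:ℝ))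
              = ∑ c ∈ Cyls, ∏ i : Fin n, G i (c i) :=
                Finset.sum_congr rfl fun c _ => by rw [hstep1 c, hfin c]
            _ = ∏ i : Fin n, ∑ j : Fin s, G i j := by
                rw [hCyls_def, ← Finset.prod_univ_sum]
            _ = ∏ i : Fin n, ENNReal.ofReal (∑ j : Fin s, Real.sqrt (p j i.val / sr)) := by
                refine Finset.prod_congr rfl fun i _ =>
                  (ENNReal.ofReal_sum_of_nonneg fun j _ => Real.sqrt_nonneg _).symm
            _ = ∏ k ∈ Finset.range n,
                ENNReal.ofReal (∑ j : Fin s, Real.sqrt (p j k / sr)) :=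
                Fin.prod_univ_eq_prod_range
                  (fun k => ENNReal.ofReal (∑ j : Fin s, Real.sqrt (p j k / sr))) n
            _ = ENNReal.ofReal
                (∏ k ∈ Finset.range n, ∑ j : Fin s, Real.sqrt (p j k / sr)) :=
                (ENNReal.ofReal_prod_of_nonneg fun k _ =>
                  Finset.sum_nonneg fun j _ => Real.sqrt_nonneg _).symm
  -- conclude
  have hlim : Filter.Tendsto (fun n : ℕ => (B:ENNReal) * ENNReal.ofReal
      (∏ k ∈ Finset.range n, ∑ j : Fin s, Real.sqrt (p j k / sr)))
      Filter.atTop (nhds 0) := by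
    have h1 : Filter.Tendsto (fun n : ℕ => ENNReal.ofReal
        (∏ k ∈ Finset.range n, ∑ j : Fin s, Real.sqrt (p j k / sr)))
        Filter.atTop (nhds 0) := by
      have := (ENNReal.continuous_ofReal.tendsto 0).comp hQ
      simpa [Function.comp_def] using this
    have := ENNReal.Tendsto.const_mul h1 (Or.inr (ENNReal.natCast_ne_top B))
    simpa using this
  have hint0 : (∫⁻ x in Set.Ico (0:ℝ) (B:ℝ), g x) = 0 :=
    le_antisymm (ge_of_tendsto' hlim key) zero_le
  have hg0 : ∀ᵐ x ∂(volume.restrict (Set.Ico (0:ℝ) (B:ℝ))), g x = 0 :=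
    (lintegral_eq_zero_iff hg_meas).mp hint0
  have hf0 : ∀ᵐ x ∂(volume.restrict (Set.Ico (0:ℝ) (B:ℝ))), f x = (0:ENNReal) := by
    refine hg0.mono (fun x hx => ?_)
    rcases (ENNReal.rpow_eq_zero_iff).mp hx with ⟨h1, _⟩ | ⟨_, h2⟩
    · exact h1
    · norm_num at h2
  have hμIco0 : μ (Set.Ico (0:ℝ) (B:ℝ)) = 0 := by
    rw [← hfd, withDensity_apply _ measurableSet_Ico]
    rw [lintegral_congr_ae hf0]
    simp
  have hμIco1 : μ (Set.Ico (0:ℝ) (B:ℝ)) = 1 := by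
    rw [hμ_def, Measure.map_apply hψ_meas measurableSet_Ico]
    have huniv : ψ ⁻¹' Set.Ico (0:ℝ) (B:ℝ) = Set.univ := by
      ext ω
      simp only [Set.mem_preimage, Set.mem_Ico, Set.mem_univ, iff_true]
      exact ⟨hψ0 ω, lt_of_le_of_lt (hψL ω) hLB⟩
    rw [huniv]; exact measure_univ
  rw [hμIco1] at hμIco0
  exact one_ne_zero hμIco0
end

section
/- If s ≥ 2 and for each n the column (d_{0n},...,d_{(s-1)n}) is a complete residue system modulo s with |d_{jn}| ≤ L, and if Q = Π_{n=1}^∞ Σ_{j=0}^{s-1} √(p_{jn}/s) > 0, then the law of ψ = Σ_{k=1}^∞ ψ_k s^{-k} (ψ_k independent with P(ψ_k = d_{jk}) = p_{jk}) is absolutely continuous with respect to Lebesgue measure. -/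
open MeasureTheory ProbabilityTheory Filter Metric
open scoped ENNReal NNReal


/-- injectivity of the partial-sum map on digit strings, from complete residue systems -/
lemma stmt19_W_inj (s : ℕ) (d : Fin s → ℕ → ℤ)
    (hres : ∀ n : ℕ, Function.Injective (fun j : Fin s => (d j n : ZMod s))) :
    ∀ (n : ℕ) (x y : Fin n → Fin s),
      ∑ k : Fin n, d (x k) (k + 1) * (s : ℤ) ^ (n - 1 - (k : ℕ)) =
        ∑ k : Fin n, d (y k) (k + 1) * (s : ℤ) ^ (n - 1 - (k : ℕ)) → x = y := by
  intro n
  induction n with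
  | zero => intro x y _; funext k; exact k.elim0
  | succ n ih =>
    intro x y h
    have hs0 : (s : ℤ) ≠ 0 := by
      by_contra h0
      simp only [Nat.cast_eq_zero] at h0
      subst h0
      exact (x 0).elim0
    have hterm : ∀ (z : Fin (n+1) → Fin s),
        ∑ k : Fin (n+1), d (z k) (k + 1) * (s : ℤ) ^ (n + 1 - 1 - (k : ℕ)) =
          (s : ℤ) * (∑ k : Fin n, d ((z ∘ Fin.castSucc) k) (k + 1) * (s : ℤ) ^ (n - 1 - (k : ℕ)))
            + d (z (Fin.last n)) (n + 1) := by
      intro z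
      rw [Fin.sum_univ_castSucc, Finset.mul_sum]
      congr 1
      · apply Finset.sum_congr rfl
        intro k _
        have hk : (k : ℕ) < n := k.isLt
        have : n + 1 - 1 - ((Fin.castSucc k : Fin (n+1)) : ℕ) = (n - 1 - (k : ℕ)) + 1 := by
          simp [Fin.coe_castSucc]; omega
        rw [this, pow_succ]
        simp [Fin.coe_castSucc]
        ring
      · simp
    rw [hterm x, hterm y] at h
    -- reduce mod s
    have hmod : (d (x (Fin.last n)) (n + 1) : ZMod s) = (d (y (Fin.last n)) (n + 1) : ZMod s) := by
      have := congrArg (fun z : ℤ => (z : ZMod s)) h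
      push_cast at this
      simpa [ZMod.natCast_self] using this
    have hlast : x (Fin.last n) = y (Fin.last n) := hres (n+1) hmod
    rw [hlast] at h
    have h2 : (s : ℤ) * (∑ k : Fin n, d ((x ∘ Fin.castSucc) k) (k + 1) * (s : ℤ) ^ (n - 1 - (k : ℕ)))
        = (s : ℤ) * (∑ k : Fin n, d ((y ∘ Fin.castSucc) k) (k + 1) * (s : ℤ) ^ (n - 1 - (k : ℕ))) := by
      omega
    have h3 := mul_left_cancel₀ hs0 h2
    have h4 := ih _ _ h3
    funext k
    induction k using Fin.lastCases with
    | last => exact hlast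
    | cast k => exact congrFun h4 k


lemma stmt19_sigma_le_one (s : ℕ) (hs : 2 ≤ s) (q : Fin s → ℝ)
    (h0 : ∀ j, 0 ≤ q j) (h1 : ∑ j, q j = 1) :
    ∑ j, Real.sqrt (q j / s) ≤ 1 := by
  have hs0 : (0:ℝ) < s := by positivity
  have hterm : ∀ j : Fin s, Real.sqrt (q j / s) ≤ (q j + 1 / s) / 2 := by
    intro j
    have : q j / s = q j * (1 / s) := by ring
    rw [this, Real.sqrt_mul (h0 j)]
    have h2 : 2 * Real.sqrt (q j) * Real.sqrt (1 / s) ≤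
        Real.sqrt (q j) ^ 2 + Real.sqrt (1 / s) ^ 2 := two_mul_le_add_sq _ _
    rw [Real.sq_sqrt (h0 j), Real.sq_sqrt (by positivity : (0:ℝ) ≤ 1 / s)] at h2
    nlinarith [Real.sqrt_nonneg (q j), Real.sqrt_nonneg (1 / (s:ℝ))]
  calc ∑ j, Real.sqrt (q j / s) ≤ ∑ j, (q j + 1 / s) / 2 := Finset.sum_le_sum fun j _ => hterm j
    _ = 1 := by
        rw [← Finset.sum_div, Finset.sum_add_distrib, h1, Finset.sum_const,
          Finset.card_univ, Fintype.card_fin, nsmul_eq_mul]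
        field_simp
        norm_num

lemma stmt19_col_bound (s : ℕ) (hs : 2 ≤ s) (q : Fin s → ℝ)
    (h0 : ∀ j, 0 ≤ q j) (h1 : ∑ j, q j = 1)
    (hσpos : 0 < ∑ j, Real.sqrt (q j / s)) :
    (s : ℝ) * ∑ j, q j ^ 2 ≤ (∑ j, Real.sqrt (q j / s))⁻¹ ^ (8 * s) := by
  set σ := ∑ j, Real.sqrt (q j / s) with hσdef
  have hσ1 : σ ≤ 1 := stmt19_sigma_le_one s hs q h0 h1
  have hs0 : (0:ℝ) < s := by positivity
  have hq1 : ∀ j, q j ≤ 1 := by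
    intro j
    rw [← h1]
    exact Finset.single_le_sum (fun i _ => h0 i) (Finset.mem_univ j)
  -- Step 1 : s * Σ q² - 1 = Σ (q-1/s)² * s
  have expand : ∑ j, ((q j - 1 / s) ^ 2 * s) = (s : ℝ) * (∑ j, q j ^ 2) - 1 := by
    have hterm : ∀ j : Fin s, (q j - 1 / s) ^ 2 * s = q j ^ 2 * s - 2 * q j + 1 / s := by
      intro j; field_simp; ring
    rw [Finset.sum_congr rfl fun j _ => hterm j, Finset.sum_add_distrib,
      Finset.sum_sub_distrib, ← Finset.sum_mul, ← Finset.mul_sum, h1,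
      Finset.sum_const, Finset.card_univ, Fintype.card_fin, nsmul_eq_mul]
    field_simp
    ring
  -- Step 2 : pointwise (q - 1/s)² ≤ 4 (√q - √(1/s))²
  have hpt : ∀ j : Fin s, (q j - 1 / s) ^ 2 ≤ 4 * (Real.sqrt (q j) - Real.sqrt (1 / s)) ^ 2 := by
    intro j
    have e1 : q j - 1 / s = (Real.sqrt (q j) - Real.sqrt (1 / s)) *
        (Real.sqrt (q j) + Real.sqrt (1 / s)) := by
      have := Real.sq_sqrt (h0 j)
      have := Real.sq_sqrt (by positivity : (0:ℝ) ≤ 1 / s)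
      nlinarith [Real.sqrt_nonneg (q j)]
    have h2 : (Real.sqrt (q j) + Real.sqrt (1 / s)) ^ 2 ≤ 4 := by
      have ha : Real.sqrt (q j) ≤ 1 := Real.sqrt_le_one.2 (hq1 j)
      have hb : Real.sqrt (1 / s) ≤ 1 := Real.sqrt_le_one.2 (by
        rw [div_le_one hs0]; exact_mod_cast le_trans one_le_two (by exact_mod_cast hs))
      nlinarith [Real.sqrt_nonneg (q j), Real.sqrt_nonneg (1 / (s:ℝ))]
    calc (q j - 1 / s) ^ 2
        = (Real.sqrt (q j) - Real.sqrt (1 / s)) ^ 2 *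
            (Real.sqrt (q j) + Real.sqrt (1 / s)) ^ 2 := by rw [e1]; ring
      _ ≤ (Real.sqrt (q j) - Real.sqrt (1 / s)) ^ 2 * 4 := by
          apply mul_le_mul_of_nonneg_left h2 (sq_nonneg _)
      _ = 4 * (Real.sqrt (q j) - Real.sqrt (1 / s)) ^ 2 := by ring
  -- Step 3 : Σ (√q - √(1/s))² = 2 - 2σ
  have hσsum : ∑ j, (Real.sqrt (q j) - Real.sqrt (1 / s)) ^ 2 = 2 - 2 * σ := by
    have hterm : ∀ j : Fin s, (Real.sqrt (q j) - Real.sqrt (1 / s)) ^ 2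
        = q j + 1 / s - 2 * Real.sqrt (q j / s) := by
      intro j
      have e : q j / s = q j * (1 / s) := by ring
      rw [e, Real.sqrt_mul (h0 j)]
      have h1' := Real.sq_sqrt (h0 j)
      have h2' := Real.sq_sqrt (by positivity : (0:ℝ) ≤ 1 / s)
      nlinarith
    rw [Finset.sum_congr rfl fun j _ => hterm j, Finset.sum_sub_distrib,
      Finset.sum_add_distrib, h1, Finset.sum_const, Finset.card_univ, Fintype.card_fin,
      nsmul_eq_mul, ← Finset.mul_sum, ← hσdef]
    field_simp
    norm_num
    ring
  -- Step 4 : s Σ q² ≤ 1 + 8 s (1 - σ)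
  have main : (s : ℝ) * ∑ j, q j ^ 2 ≤ 1 + 8 * s * (1 - σ) := by
    have : ∑ j, ((q j - 1 / s) ^ 2 * s) ≤ (4 * (2 - 2 * σ)) * s := by
      rw [← Finset.sum_mul]
      apply mul_le_mul_of_nonneg_right _ (le_of_lt hs0)
      calc ∑ j, (q j - 1 / s) ^ 2 ≤ ∑ j, 4 * (Real.sqrt (q j) - Real.sqrt (1 / s)) ^ 2 :=
            Finset.sum_le_sum fun j _ => hpt j
        _ = 4 * (2 - 2 * σ) := by rw [← Finset.mul_sum, hσsum]
    rw [expand] at this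
    nlinarith
  -- Step 5 : 1 + 8 s (1-σ) ≤ σ⁻¹ ^ (8 s)
  have final : 1 + 8 * (s:ℝ) * (1 - σ) ≤ σ⁻¹ ^ (8 * s) := by
    have hA : ((8 * s : ℕ) : ℝ) = 8 * (s : ℝ) := by push_cast; ring
    have h1' : 1 + 8 * (s:ℝ) * (1 - σ) ≤ Real.exp ((8 * s : ℕ) * (1 - σ)) := by
      have := Real.add_one_le_exp (((8 * s : ℕ) : ℝ) * (1 - σ))
      rw [hA] at this ⊢
      linarith
    have h2' : Real.exp (((8 * s : ℕ) : ℝ) * (1 - σ)) = Real.exp (1 - σ) ^ (8 * s) :=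
      Real.exp_nat_mul _ _
    have h3' : Real.exp (1 - σ) ≤ σ⁻¹ := by
      have hσexp : σ ≤ Real.exp (σ - 1) := by
        have := Real.add_one_le_exp (σ - 1); linarith
      have : Real.exp (1 - σ) = (Real.exp (σ - 1))⁻¹ := by
        rw [← Real.exp_neg]; ring_nf
      rw [this]
      exact inv_anti₀ hσpos hσexp
    calc 1 + 8 * (s:ℝ) * (1 - σ) ≤ Real.exp (1 - σ) ^ (8 * s) := by rw [← h2']; exact h1'
      _ ≤ σ⁻¹ ^ (8 * s) := pow_le_pow_left₀ (Real.exp_nonneg _) h3' _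
  linarith

/-- Absolute continuity criterion: if each column of `d` is a complete residue
system mod `s` with entries bounded by `L`, and `Q = Π_n Σ_j √(p_{jn}/s) > 0`,
then the law of `ψ = Σ ψ_k s^{-k}` is absolutely continuous. -/
theorem stmt19 {Ω : Type*} [MeasureSpace Ω] [IsProbabilityMeasure (ℙ : Measure Ω)]
    (s : ℕ) (hs : 2 ≤ s) (L : ℝ) (hL : 0 < L)
    (d : Fin s → ℕ → ℤ)
    (hres : ∀ n : ℕ, Function.Bijective (fun j : Fin s => (d j n : ZMod s)))
    (hbd : ∀ (j : Fin s) (n : ℕ), |(d j n : ℝ)| ≤ L)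
    (p : Fin s → ℕ → ℝ) (hp0 : ∀ j k, 0 ≤ p j k) (hp1 : ∀ k, ∑ j : Fin s, p j k = 1)
    (ψk : ℕ → Ω → ℝ) (hmeas : ∀ k, Measurable (ψk k))
    (hindep : iIndepFun ψk (ℙ : Measure Ω))
    (hval : ∀ (j : Fin s) (k : ℕ),
      (ℙ : Measure Ω) {ω | ψk k ω = (d j (k + 1) : ℝ)} = ENNReal.ofReal (p j (k + 1)))
    (hrange : ∀ (k : ℕ) (ω : Ω), ∃ j : Fin s, ψk k ω = (d j (k + 1) : ℝ))
    (c : ℝ) (hc : 0 < c)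
    (hQ : Filter.Tendsto
      (fun N : ℕ => ∏ n ∈ Finset.range N, ∑ j : Fin s, Real.sqrt (p j n / s))
      Filter.atTop (nhds c))
    (ψ : Ω → ℝ) (hψ : ∀ ω, ψ ω = ∑' k : ℕ, ψk k ω / (s : ℝ) ^ (k + 1)) :
    Measure.map ψ (ℙ : Measure Ω) ≪ volume := by
  classical
  have hs0R : (0:ℝ) < s := by positivity
  have hs1R : (1:ℝ) < s := by exact_mod_cast lt_of_lt_of_le one_lt_two (by exact_mod_cast hs)
  -- σ and its bounds
  set σ : ℕ → ℝ := fun n => ∑ j : Fin s, Real.sqrt (p j n / s) with hσdef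
  have hσ0 : ∀ n, 0 ≤ σ n := fun n => Finset.sum_nonneg fun j _ => Real.sqrt_nonneg _
  have hσ1 : ∀ n, σ n ≤ 1 := fun n =>
    stmt19_sigma_le_one s hs (fun j => p j n) (fun j => hp0 j n) (hp1 n)
  have hprodσ : ∀ N, c ≤ ∏ n ∈ Finset.range N, σ n := by
    intro N
    apply le_of_tendsto hQ
    filter_upwards [Filter.eventually_ge_atTop N] with M hM
    rw [← Finset.prod_range_mul_prod_Ico σ hM]
    calc (∏ n ∈ Finset.range N, σ n) * ∏ n ∈ Finset.Ico N M, σ n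
        ≤ (∏ n ∈ Finset.range N, σ n) * 1 := by
          apply mul_le_mul_of_nonneg_left _ (Finset.prod_nonneg fun i _ => hσ0 i)
          exact Finset.prod_le_one (fun i _ => hσ0 i) (fun i _ => hσ1 i)
      _ = _ := mul_one _
  have hσc : ∀ n, c ≤ σ n := by
    intro n
    have h1 := hprodσ (n+1)
    rw [Finset.prod_range_succ] at h1
    calc c ≤ (∏ k ∈ Finset.range n, σ k) * σ n := h1
      _ ≤ 1 * σ n := by
          apply mul_le_mul_of_nonneg_right _ (hσ0 n)
          exact Finset.prod_le_one (fun i _ => hσ0 i) (fun i _ => hσ1 i)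
      _ = σ n := one_mul _
  have htailc : ∀ N, c ≤ ∏ k ∈ Finset.range N, σ (k+1) := by
    intro N
    have h1 := hprodσ (N+1)
    rw [Finset.prod_range_succ'] at h1
    calc c ≤ (∏ k ∈ Finset.range N, σ (k+1)) * σ 0 := h1
      _ ≤ (∏ k ∈ Finset.range N, σ (k+1)) * 1 := by
          apply mul_le_mul_of_nonneg_left (hσ1 0)
          exact Finset.prod_nonneg fun i _ => hσ0 (i+1)
      _ = _ := mul_one _
  -- distinctness of digits
  have hdinj : ∀ (m : ℕ) (j j' : Fin s), (d j m : ℝ) = (d j' m : ℝ) → j = j' := by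
    intro m j j' h
    have h' : d j m = d j' m := by exact_mod_cast h
    exact (hres m).injective (by simp only [h'])
  have hbd' : ∀ k ω, |ψk k ω| ≤ L := by
    intro k ω
    obtain ⟨j, hj⟩ := hrange k ω
    rw [hj]; exact hbd j (k+1)
  -- partial sums
  set T : ℕ → Ω → ℝ := fun n ω => ∑ k ∈ Finset.range n, ψk k ω / (s:ℝ)^(k+1) with hT
  have hTmeas : ∀ n, Measurable (T n) :=
    fun n => Finset.measurable_sum _ (fun k _ => (hmeas k).div_const _)
  have hsummable : ∀ ω, Summable (fun k => ψk k ω / (s:ℝ)^(k+1)) := by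
    intro ω
    apply Summable.of_norm_bounded (g := fun k => (L/s) * (1/s)^k)
    · apply Summable.mul_left
      exact summable_geometric_of_lt_one (by positivity) (by
        rw [div_lt_one hs0R]; exact hs1R)
    · intro k
      rw [norm_div, Real.norm_eq_abs, Real.norm_eq_abs]
      rw [abs_of_pos (by positivity : (0:ℝ) < (s:ℝ)^(k+1))]
      calc |ψk k ω| / (s:ℝ)^(k+1) ≤ L / (s:ℝ)^(k+1) := by
            exact div_le_div_of_nonneg_right (hbd' k ω) (by positivity)
        _ = (L/s) * (1/s)^k := by
            rw [pow_succ', div_pow, one_pow, div_mul_div_comm, mul_one]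
  have hψT : ∀ ω, Filter.Tendsto (fun n => T n ω) Filter.atTop (nhds (ψ ω)) := by
    intro ω
    rw [hψ ω]
    exact (hsummable ω).hasSum.tendsto_sum_nat
  have hψmeas : Measurable ψ :=
    measurable_of_tendsto_metrizable hTmeas (tendsto_pi_nhds.2 hψT)
  have htail : ∀ (n : ℕ) (ω : Ω), |ψ ω - T n ω| ≤ L / (s:ℝ)^n := by
    intro n ω
    have hsum := hsummable ω
    have hdecomp := Summable.sum_add_tsum_nat_add (f := fun k => ψk k ω / (s:ℝ)^(k+1)) n hsum
    have heq : ψ ω - T n ω = ∑' i, ψk (i+n) ω / (s:ℝ)^(i+n+1) := by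
      rw [hψ ω, ← hdecomp, hT]
      ring
    rw [heq]
    have hb : ∀ i : ℕ, ‖ψk (i+n) ω / (s:ℝ)^(i+n+1)‖ ≤ (L/(s:ℝ)^(n+1)) * (1/s)^i := by
      intro i
      rw [norm_div, Real.norm_eq_abs, Real.norm_eq_abs,
        abs_of_pos (by positivity : (0:ℝ) < (s:ℝ)^(i+n+1))]
      calc |ψk (i+n) ω| / (s:ℝ)^(i+n+1) ≤ L / (s:ℝ)^(i+n+1) :=
            div_le_div_of_nonneg_right (hbd' (i+n) ω) (by positivity)
        _ = (L/(s:ℝ)^(n+1)) * (1/s)^i := by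
            rw [div_pow, one_pow, div_mul_div_comm, mul_one, ← pow_add]
            congr 2
            omega
    have hgs : Summable (fun i : ℕ => (L/(s:ℝ)^(n+1)) * (1/s)^i) := by
      apply Summable.mul_left
      exact summable_geometric_of_lt_one (by positivity) (by
        rw [div_lt_one hs0R]; exact hs1R)
    have hsumtail : Summable (fun i => ψk (i+n) ω / (s:ℝ)^(i+n+1)) :=
      (summable_nat_add_iff (f := fun k => ψk k ω / (s:ℝ)^(k+1)) n).2 hsum
    have hnormsum : Summable (fun i => ‖ψk (i+n) ω / (s:ℝ)^(i+n+1)‖) :=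
      Summable.of_nonneg_of_le (fun i => norm_nonneg _) hb hgs
    calc |∑' i, ψk (i+n) ω / (s:ℝ)^(i+n+1)|
        ≤ ∑' i, ‖ψk (i+n) ω / (s:ℝ)^(i+n+1)‖ := norm_tsum_le_tsum_norm hnormsum
      _ ≤ ∑' i : ℕ, (L/(s:ℝ)^(n+1)) * (1/s)^i := Summable.tsum_le_tsum hb hnormsum hgs
      _ = (L/(s:ℝ)^(n+1)) * (1 - 1/(s:ℝ))⁻¹ := by
          rw [tsum_mul_left, tsum_geometric_of_lt_one (by positivity) (by
            rw [div_lt_one hs0R]; exact hs1R)]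
      _ ≤ L / (s:ℝ)^n := by
          have h2 : (2:ℝ) ≤ s := by exact_mod_cast hs
          have hhalf : (1:ℝ)/s ≤ 1/2 := by
            rw [div_le_div_iff₀ hs0R two_pos]; linarith
          have hgeo : (1 - 1/(s:ℝ))⁻¹ ≤ 2 := by
            have h' : (1:ℝ)/2 ≤ 1 - 1/s := by linarith
            calc (1 - 1/(s:ℝ))⁻¹ ≤ ((1:ℝ)/2)⁻¹ := by
                  apply inv_anti₀ (by norm_num) h'
              _ = 2 := by norm_num
          calc L/(s:ℝ)^(n+1) * (1 - 1/(s:ℝ))⁻¹ ≤ L/(s:ℝ)^(n+1) * 2 :=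
                mul_le_mul_of_nonneg_left hgeo (by positivity)
            _ ≤ L / (s:ℝ)^n := by
                rw [pow_succ, div_mul_eq_mul_div,
                  div_le_div_iff₀ (by positivity) (by positivity)]
                have hp : (0:ℝ) < (s:ℝ)^n := by positivity
                nlinarith [mul_le_mul_of_nonneg_left h2 (le_of_lt (mul_pos hL hp))]
  -- pushforward measure and constants
  set μ : Measure ℝ := Measure.map ψ ℙ with hμdef
  haveI hμprob : IsProbabilityMeasure μ := Measure.isProbabilityMeasure_map hψmeas.aemeasurable
  set C₀ : ℝ := 1 + 2*L with hC₀def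
  have hC₀pos : 0 < C₀ := by rw [hC₀def]; positivity
  set C₁ : ℕ := ⌊2*C₀⌋₊ + 1 with hC₁def
  -- cylinders
  set Cyl : ∀ n : ℕ, (Fin n → Fin s) → Set Ω :=
    fun n x => ⋂ k : Fin n, (ψk k) ⁻¹' {((d (x k) ((k:ℕ)+1) : ℤ) : ℝ)} with hCyl
  set V : ∀ n : ℕ, (Fin n → Fin s) → ℝ :=
    fun n x => ∑ k : Fin n, ((d (x k) ((k:ℕ)+1) : ℤ) : ℝ) / (s:ℝ)^((k:ℕ)+1) with hV
  have hCylmeas : ∀ n x, MeasurableSet (Cyl n x) := fun n x =>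
    MeasurableSet.iInter (fun k => (hmeas k) (measurableSet_singleton _))
  have hcover : ∀ n ω, ∃ x : Fin n → Fin s, ω ∈ Cyl n x := by
    intro n ω
    refine ⟨fun k => Classical.choose (hrange k ω), ?_⟩
    simp only [hCyl, Set.mem_iInter, Set.mem_preimage, Set.mem_singleton_iff]
    intro k
    exact Classical.choose_spec (hrange (k:ℕ) ω)
  have hTCyl : ∀ n x ω, ω ∈ Cyl n x → T n ω = V n x := by
    intro n x ω hω
    simp only [hCyl, Set.mem_iInter, Set.mem_preimage, Set.mem_singleton_iff] at hω
    show (∑ k ∈ Finset.range n, ψk k ω / (s:ℝ)^(k+1))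
        = ∑ k : Fin n, ((d (x k) ((k:ℕ)+1) : ℤ) : ℝ) / (s:ℝ)^((k:ℕ)+1)
    rw [Finset.sum_range (f := fun k => ψk k ω / (s:ℝ)^(k+1))]
    exact Finset.sum_congr rfl fun k _ => by rw [hω k]
  -- measure of cylinders via independence
  have hPCyl : ∀ n x, ℙ (Cyl n x) = ∏ k : Fin n, ENNReal.ofReal (p (x k) ((k:ℕ)+1)) := by
    intro n x
    set sets : ℕ → Set ℝ :=
      fun i => if h : i < n then {((d (x ⟨i, h⟩) (i+1) : ℤ) : ℝ)} else Set.univ with hsets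
    have hsetsm : ∀ i, i ∈ Finset.range n → MeasurableSet (sets i) := by
      intro i _
      rw [hsets]
      by_cases h : i < n
      · simp only [dif_pos h]; exact measurableSet_singleton _
      · simp only [dif_neg h]; exact MeasurableSet.univ
    have hind := hindep.measure_inter_preimage_eq_mul (Finset.range n) hsetsm
    have hL1 : (⋂ i ∈ Finset.range n, ψk i ⁻¹' sets i) = Cyl n x := by
      ext ω
      simp only [hCyl, Set.mem_iInter, Set.mem_preimage, Set.mem_singleton_iff,
        Finset.mem_range, hsets]
      constructor
      · intro h k
        have := h (k:ℕ) k.isLt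
        rw [dif_pos k.isLt] at this
        simpa using this
      · intro h i hi
        rw [dif_pos hi]
        simpa using h ⟨i, hi⟩
    have hR1 : ∏ i ∈ Finset.range n, ℙ (ψk i ⁻¹' sets i)
        = ∏ k : Fin n, ENNReal.ofReal (p (x k) ((k:ℕ)+1)) := by
      rw [Finset.prod_range (f := fun i => ℙ (ψk i ⁻¹' sets i))]
      apply Finset.prod_congr rfl
      intro k _
      have h1 : sets (k:ℕ) = {((d (x k) ((k:ℕ)+1) : ℤ) : ℝ)} := by
        rw [hsets]
        simp only [dif_pos k.isLt]
      rw [h1]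
      have h2 : ψk (k:ℕ) ⁻¹' {((d (x k) ((k:ℕ)+1) : ℤ) : ℝ)}
          = {ω | ψk (k:ℕ) ω = ((d (x k) ((k:ℕ)+1) : ℤ) : ℝ)} := by
        ext ω; simp
      rw [h2, hval]
    rw [← hL1, hind, hR1]
  -- the integer-valued rescaled partial sums
  have hWV : ∀ (n:ℕ) (x : Fin n → Fin s),
      ((∑ k : Fin n, d (x k) ((k:ℕ)+1) * (s:ℤ)^(n-1-(k:ℕ)) : ℤ) : ℝ) = (s:ℝ)^n * V n x := by
    intro n x
    push_cast
    rw [hV, Finset.mul_sum]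
    apply Finset.sum_congr rfl
    intro k _
    have hk : (k:ℕ) < n := k.isLt
    have hpow : (s:ℝ)^(n-1-(k:ℕ)) = (s:ℝ)^n / (s:ℝ)^((k:ℕ)+1) := by
      rw [eq_div_iff (by positivity), ← pow_add]
      congr 1
      omega
    rw [hpow]
    ring
  -- cardinality bound
  have hcardN : ∀ (n:ℕ) (v : ℝ),
      (Finset.univ.filter (fun y : Fin n → Fin s => |V n y - v| ≤ C₀ / (s:ℝ)^n)).card ≤ C₁ := by
    intro n v
    have hinj := stmt19_W_inj s d (fun m => (hres m).injective) n
    set W : (Fin n → Fin s) → ℤ :=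
      fun y => ∑ k : Fin n, d (y k) ((k:ℕ)+1) * (s:ℤ)^(n-1-(k:ℕ)) with hW
    have hmaps : ∀ y ∈ Finset.univ.filter
        (fun y : Fin n → Fin s => |V n y - v| ≤ C₀ / (s:ℝ)^n),
        W y ∈ Finset.Icc ⌈(s:ℝ)^n * v - C₀⌉ ⌊(s:ℝ)^n * v + C₀⌋ := by
      intro y hy
      rw [Finset.mem_filter] at hy
      rw [Finset.mem_Icc, Int.ceil_le, Int.le_floor]
      have h1 : |(W y : ℝ) - (s:ℝ)^n * v| ≤ C₀ := by
        rw [hW, hWV n y]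
        calc |(s:ℝ)^n * V n y - (s:ℝ)^n * v| = (s:ℝ)^n * |V n y - v| := by
              rw [← mul_sub, abs_mul, abs_of_pos (by positivity : (0:ℝ) < (s:ℝ)^n)]
          _ ≤ (s:ℝ)^n * (C₀ / (s:ℝ)^n) := mul_le_mul_of_nonneg_left hy.2 (by positivity)
          _ = C₀ := by field_simp
      rw [abs_le] at h1
      constructor <;> [linarith [h1.1]; linarith [h1.2]]
    have hcard1 := Finset.card_le_card_of_injOn W hmaps (fun y _ y' _ h => hinj y y' h)
    apply le_trans hcard1
    rw [Int.card_Icc]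
    rw [Int.toNat_le]
    have h1 : (⌊(s:ℝ)^n * v + C₀⌋ : ℝ) ≤ (s:ℝ)^n*v + C₀ := Int.floor_le _
    have h2 : (s:ℝ)^n*v - C₀ ≤ (⌈(s:ℝ)^n*v - C₀⌉ : ℝ) := Int.le_ceil _
    have h3 : (2*C₀ : ℝ) ≤ (⌊2*C₀⌋₊ : ℝ) + 1 := by
      have := Nat.lt_floor_add_one (2*C₀)
      linarith
    have h4 : (⌊(s:ℝ)^n * v + C₀⌋ + 1 - ⌈(s:ℝ)^n * v - C₀⌉ : ℤ) < (⌊2*C₀⌋₊ : ℤ) + 2 := by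
      have h5 : ((⌊(s:ℝ)^n * v + C₀⌋ + 1 - ⌈(s:ℝ)^n * v - C₀⌉ : ℤ) : ℝ) < (⌊2*C₀⌋₊ : ℝ) + 2 := by
        push_cast
        have := Nat.lt_floor_add_one (2*C₀)
        linarith
      exact_mod_cast h5
    rw [hC₁def]
    push_cast
    omega
  -- the comparison functions
  set g : ℕ → ℝ → ℝ≥0∞ := fun n v =>
    ∑ y ∈ Finset.univ.filter (fun y : Fin n → Fin s => |V n y - v| ≤ C₀ / (s:ℝ)^n),
      ℙ (Cyl n y) with hg
  set f : ℕ → Ω → ℝ≥0∞ := fun n ω =>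
    ∑ x : Fin n → Fin s, (Cyl n x).indicator (fun _ => (s:ℝ≥0∞)^n * g n (V n x)) ω with hf
  have hfmeas : ∀ n, Measurable (f n) := by
    intro n
    apply Finset.measurable_sum
    intro x _
    exact Measurable.indicator measurable_const (hCylmeas n x)
  have hflb : ∀ (n:ℕ) (ω : Ω),
      (s:ℝ≥0∞)^n * μ (Metric.closedBall (ψ ω) ((1/(s:ℝ))^n)) ≤ f n ω := by
    intro n ω
    obtain ⟨x, hx⟩ := hcover n ω
    have hsub : ψ ⁻¹' (Metric.closedBall (ψ ω) ((1/(s:ℝ))^n))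
        ⊆ ⋃ y ∈ Finset.univ.filter
            (fun y : Fin n → Fin s => |V n y - V n x| ≤ C₀ / (s:ℝ)^n), Cyl n y := by
      intro ω' hω'
      obtain ⟨y, hy⟩ := hcover n ω'
      apply Set.mem_biUnion ?_ hy
      show y ∈ Finset.univ.filter (fun y : Fin n → Fin s => |V n y - V n x| ≤ C₀ / (s:ℝ)^n)
      rw [Finset.mem_filter]
      refine ⟨Finset.mem_univ _, ?_⟩
      rw [← hTCyl n y ω' hy, ← hTCyl n x ω hx]
      have h1 : |ψ ω' - ψ ω| ≤ (1/(s:ℝ))^n := by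
        have := Set.mem_preimage.1 hω'
        rw [Metric.mem_closedBall, Real.dist_eq] at this
        exact this
      have h2 := htail n ω'
      have h3 := htail n ω
      calc |T n ω' - T n ω|
          ≤ |T n ω' - ψ ω'| + |ψ ω' - T n ω| := abs_sub_le _ _ _
        _ ≤ |T n ω' - ψ ω'| + (|ψ ω' - ψ ω| + |ψ ω - T n ω|) := by
            have := abs_sub_le (ψ ω') (ψ ω) (T n ω)
            linarith
        _ ≤ L/(s:ℝ)^n + ((1/(s:ℝ))^n + L/(s:ℝ)^n) := by
            have e1 : |T n ω' - ψ ω'| ≤ L/(s:ℝ)^n := by rw [abs_sub_comm]; exact h2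
            linarith [h1, h3]
        _ ≤ C₀ / (s:ℝ)^n := by
            rw [div_pow, one_pow, hC₀def]
            rw [add_div]
            have : (2*L)/(s:ℝ)^n = L/(s:ℝ)^n + L/(s:ℝ)^n := by ring
            linarith [this]
    have hμball : μ (Metric.closedBall (ψ ω) ((1/(s:ℝ))^n)) ≤ g n (V n x) := by
      rw [hμdef, Measure.map_apply hψmeas measurableSet_closedBall]
      calc ℙ (ψ ⁻¹' (Metric.closedBall (ψ ω) ((1/(s:ℝ))^n)))
          ≤ ℙ (⋃ y ∈ Finset.univ.filter
              (fun y : Fin n → Fin s => |V n y - V n x| ≤ C₀ / (s:ℝ)^n), Cyl n y) :=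
            measure_mono hsub
        _ ≤ ∑ y ∈ Finset.univ.filter
              (fun y : Fin n → Fin s => |V n y - V n x| ≤ C₀ / (s:ℝ)^n), ℙ (Cyl n y) :=
            measure_biUnion_finset_le _ _
    calc (s:ℝ≥0∞)^n * μ (Metric.closedBall (ψ ω) ((1/(s:ℝ))^n))
        ≤ (s:ℝ≥0∞)^n * g n (V n x) := mul_le_mul_right hμball _
      _ ≤ f n ω := by
          have hsingle := Finset.single_le_sum
            (f := fun x' : Fin n → Fin s =>
              (Cyl n x').indicator (fun _ => (s:ℝ≥0∞)^n * g n (V n x')) ω)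
            (fun _ _ => zero_le) (Finset.mem_univ x)
          simp only [Set.indicator_of_mem hx] at hsingle
          exact hsingle
  -- the key integral bound
  have hkey : ∀ n : ℕ, ∫⁻ ω, f n ω ∂(ℙ : Measure Ω)
      ≤ 2 * C₁ * ENNReal.ofReal (c⁻¹ ^ (8*s)) := by
    intro n
    set P : (Fin n → Fin s) → ℝ≥0∞ := fun x => ℙ (Cyl n x) with hP
    set r : ℝ := C₀ / (s:ℝ)^n with hr
    set N : (Fin n → Fin s) → Finset (Fin n → Fin s) :=
      fun x => Finset.univ.filter (fun y : Fin n → Fin s => |V n y - V n x| ≤ r) with hN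
    have hint : ∫⁻ ω, f n ω ∂(ℙ : Measure Ω)
        = ∑ x : Fin n → Fin s, P x * ((s:ℝ≥0∞)^n * g n (V n x)) := by
      rw [hf]
      rw [lintegral_finset_sum _
        (fun x _ => Measurable.indicator measurable_const (hCylmeas n x))]
      apply Finset.sum_congr rfl
      intro x _
      rw [lintegral_indicator_const (hCylmeas n x), mul_comm]
    have hgN : ∀ x, g n (V n x) = ∑ y ∈ N x, P y := by
      intro x
      rfl
    have h2 : ∑ x : Fin n → Fin s, P x * ((s:ℝ≥0∞)^n * g n (V n x))
        = (s:ℝ≥0∞)^n * ∑ x : Fin n → Fin s, ∑ y ∈ N x, P x * P y := by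
      rw [Finset.mul_sum]
      apply Finset.sum_congr rfl
      intro x _
      rw [hgN x, ← mul_assoc, mul_comm (P x), mul_assoc, Finset.mul_sum]
    have hab : ∀ a b : ℝ≥0∞, a * b ≤ a*a + b*b := by
      intro a b
      rcases le_total a b with h | h
      · calc a*b ≤ b*b := mul_le_mul_left h b
          _ ≤ a*a + b*b := le_add_self
      · calc a*b ≤ a*a := mul_le_mul_right h a
          _ ≤ a*a + b*b := le_self_add
    have h3 : ∑ x : Fin n → Fin s, ∑ y ∈ N x, P x * P y
        ≤ ∑ x : Fin n → Fin s, ∑ y ∈ N x, (P x * P x + P y * P y) :=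
      Finset.sum_le_sum fun x _ => Finset.sum_le_sum fun y _ => hab (P x) (P y)
    have hcard' : ∀ x : Fin n → Fin s, ((N x).card : ℝ≥0∞) ≤ (C₁ : ℝ≥0∞) := by
      intro x
      exact Nat.cast_le.2 (hcardN n (V n x))
    have h4 : ∑ x : Fin n → Fin s, ∑ y ∈ N x, (P x * P x + P y * P y)
        ≤ ∑ x : Fin n → Fin s, (C₁ : ℝ≥0∞) * (P x * P x)
          + ∑ x : Fin n → Fin s, ∑ y ∈ N x, P y * P y := by
      rw [← Finset.sum_add_distrib]
      apply Finset.sum_le_sum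
      intro x _
      rw [Finset.sum_add_distrib, Finset.sum_const, nsmul_eq_mul]
      exact add_le_add_left (mul_le_mul_left (hcard' x) _) _
    have hswap : ∑ x : Fin n → Fin s, ∑ y ∈ N x, P y * P y
        ≤ ∑ y : Fin n → Fin s, (C₁ : ℝ≥0∞) * (P y * P y) := by
      have e1 : ∀ x : Fin n → Fin s, ∑ y ∈ N x, P y * P y
          = ∑ y : Fin n → Fin s, if |V n y - V n x| ≤ r then P y * P y else 0 := by
        intro x
        rw [hN, Finset.sum_filter]
      rw [Finset.sum_congr rfl (fun x _ => e1 x), Finset.sum_comm]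
      apply Finset.sum_le_sum
      intro y _
      have e2 : ∑ x : Fin n → Fin s, (if |V n y - V n x| ≤ r then P y * P y else 0)
          = ∑ x ∈ Finset.univ.filter (fun x : Fin n → Fin s => |V n y - V n x| ≤ r),
              P y * P y := (Finset.sum_filter _ _).symm
      rw [e2, Finset.sum_const, nsmul_eq_mul]
      have e3 : (Finset.univ.filter (fun x : Fin n → Fin s => |V n y - V n x| ≤ r)).card
          = (Finset.univ.filter (fun x : Fin n → Fin s => |V n x - V n y| ≤ r)).card := by
        congr 1
        apply Finset.filter_congr
        intro x _
        rw [abs_sub_comm]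
      apply mul_le_mul_left
      rw [e3]
      exact Nat.cast_le.2 (hcardN n (V n y))
    -- the product formula for the collision sum
    have hprodsum : ∑ x : Fin n → Fin s, P x * P x
        = ∏ k : Fin n, (∑ j : Fin s,
            ENNReal.ofReal (p j ((k:ℕ)+1)) * ENNReal.ofReal (p j ((k:ℕ)+1))) := by
      have e1 : ∀ x : Fin n → Fin s, P x * P x
          = ∏ k : Fin n, (ENNReal.ofReal (p (x k) ((k:ℕ)+1))
              * ENNReal.ofReal (p (x k) ((k:ℕ)+1))) := by
        intro x
        rw [hP]
        simp only [hPCyl n x]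
        rw [← Finset.prod_mul_distrib]
      rw [Finset.sum_congr rfl (fun x _ => e1 x)]
      rw [Finset.prod_univ_sum (t := fun _ : Fin n => (Finset.univ : Finset (Fin s)))
        (f := fun (k : Fin n) (j : Fin s) =>
          ENNReal.ofReal (p j ((k:ℕ)+1)) * ENNReal.ofReal (p j ((k:ℕ)+1)))]
      rw [Fintype.piFinset_univ]
    -- the scalar bound
    have hreal : (s:ℝ≥0∞)^n * ∏ k : Fin n, (∑ j : Fin s,
          ENNReal.ofReal (p j ((k:ℕ)+1)) * ENNReal.ofReal (p j ((k:ℕ)+1)))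
        ≤ ENNReal.ofReal (c⁻¹ ^ (8*s)) := by
      have e1 : ∀ k : Fin n, ∑ j : Fin s,
          ENNReal.ofReal (p j ((k:ℕ)+1)) * ENNReal.ofReal (p j ((k:ℕ)+1))
          = ENNReal.ofReal (∑ j : Fin s, p j ((k:ℕ)+1)^2) := by
        intro k
        rw [ENNReal.ofReal_sum_of_nonneg (fun j _ => by positivity)]
        apply Finset.sum_congr rfl
        intro j _
        rw [sq, ENNReal.ofReal_mul (hp0 j ((k:ℕ)+1))]
      rw [Finset.prod_congr rfl (fun k _ => e1 k)]
      have e2 : (s:ℝ≥0∞)^n = ∏ _k : Fin n, ENNReal.ofReal (s:ℝ) := by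
        rw [Finset.prod_const, Finset.card_univ, Fintype.card_fin, ENNReal.ofReal_natCast]
      rw [e2, ← Finset.prod_mul_distrib]
      have e3 : ∀ k : Fin n, ENNReal.ofReal (s:ℝ) * ENNReal.ofReal (∑ j : Fin s, p j ((k:ℕ)+1)^2)
          = ENNReal.ofReal ((s:ℝ) * ∑ j : Fin s, p j ((k:ℕ)+1)^2) := by
        intro k
        rw [ENNReal.ofReal_mul (by positivity)]
      rw [Finset.prod_congr rfl (fun k _ => e3 k),
        ← ENNReal.ofReal_prod_of_nonneg (fun k _ => by positivity)]
      apply ENNReal.ofReal_le_ofReal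
      -- now a real inequality
      have hb1 : ∀ k : Fin n, (s:ℝ) * ∑ j : Fin s, p j ((k:ℕ)+1)^2
          ≤ (σ ((k:ℕ)+1))⁻¹ ^ (8*s) := by
        intro k
        exact stmt19_col_bound s hs (fun j => p j ((k:ℕ)+1)) (fun j => hp0 j ((k:ℕ)+1))
          (hp1 ((k:ℕ)+1)) (lt_of_lt_of_le hc (hσc ((k:ℕ)+1)))
      calc ∏ k : Fin n, ((s:ℝ) * ∑ j : Fin s, p j ((k:ℕ)+1)^2)
          ≤ ∏ k : Fin n, (σ ((k:ℕ)+1))⁻¹ ^ (8*s) := by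
            apply Finset.prod_le_prod (fun k _ => by positivity) (fun k _ => hb1 k)
        _ = ((∏ k : Fin n, σ ((k:ℕ)+1))⁻¹) ^ (8*s) := by
            rw [Finset.prod_pow, Finset.prod_inv_distrib]
        _ ≤ (c⁻¹) ^ (8*s) := by
            apply pow_le_pow_left₀ (by positivity)
            apply inv_anti₀ hc
            calc c ≤ ∏ k ∈ Finset.range n, σ (k+1) := htailc n
              _ = ∏ k : Fin n, σ ((k:ℕ)+1) := Finset.prod_range (fun k => σ (k+1))
    -- put it together
    calc ∫⁻ ω, f n ω ∂(ℙ : Measure Ω)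
        = (s:ℝ≥0∞)^n * ∑ x : Fin n → Fin s, ∑ y ∈ N x, P x * P y := by rw [hint, h2]
      _ ≤ (s:ℝ≥0∞)^n * (∑ x : Fin n → Fin s, (C₁ : ℝ≥0∞) * (P x * P x)
            + ∑ x : Fin n → Fin s, ∑ y ∈ N x, P y * P y) :=
          mul_le_mul_right (le_trans h3 h4) _
      _ ≤ (s:ℝ≥0∞)^n * (∑ x : Fin n → Fin s, (C₁ : ℝ≥0∞) * (P x * P x)
            + ∑ y : Fin n → Fin s, (C₁ : ℝ≥0∞) * (P y * P y)) :=
          mul_le_mul_right (add_le_add_right hswap _) _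
      _ = 2 * C₁ * ((s:ℝ≥0∞)^n * ∑ x : Fin n → Fin s, P x * P x) := by
          have e4 : ∑ x : Fin n → Fin s, (C₁:ℝ≥0∞) * (P x * P x)
              = (C₁:ℝ≥0∞) * ∑ x : Fin n → Fin s, P x * P x := (Finset.mul_sum _ _ _).symm
          rw [e4]
          ring
      _ ≤ 2 * C₁ * ENNReal.ofReal (c⁻¹ ^ (8*s)) := by
          apply mul_le_mul_right
          rw [hprodsum]
          exact hreal
  -- Fatou and a.e. finiteness of the liminf
  have hCb : (2 * (C₁:ℝ≥0∞) * ENNReal.ofReal (c⁻¹ ^ (8*s))) ≠ ⊤ :=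
    ENNReal.mul_ne_top (ENNReal.mul_ne_top (by simp) (ENNReal.natCast_ne_top C₁))
      ENNReal.ofReal_ne_top
  have hae : ∀ᵐ ω ∂(ℙ : Measure Ω), Filter.liminf (fun n => f n ω) Filter.atTop < ⊤ := by
    apply ae_lt_top (Measurable.liminf hfmeas)
    apply ne_top_of_le_ne_top hCb
    calc ∫⁻ ω, Filter.liminf (fun n => f n ω) Filter.atTop ∂(ℙ : Measure Ω)
        ≤ Filter.liminf (fun n => ∫⁻ ω, f n ω ∂(ℙ : Measure Ω)) Filter.atTop :=
          lintegral_liminf_le hfmeas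
      _ ≤ Filter.liminf (fun _ : ℕ => 2 * (C₁:ℝ≥0∞) * ENNReal.ofReal (c⁻¹ ^ (8*s)))
            Filter.atTop := Filter.liminf_le_liminf (Filter.Eventually.of_forall hkey)
      _ = 2 * (C₁:ℝ≥0∞) * ENNReal.ofReal (c⁻¹ ^ (8*s)) := Filter.liminf_const _
  have haeball : ∀ᵐ ω ∂(ℙ : Measure Ω), Filter.liminf
      (fun n => (s:ℝ≥0∞)^n * μ (Metric.closedBall (ψ ω) ((1/(s:ℝ))^n))) Filter.atTop < ⊤ := by
    filter_upwards [hae] with ω hω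
    exact lt_of_le_of_lt
      (Filter.liminf_le_liminf (Filter.Eventually.of_forall (fun n => hflb n ω))) hω
  -- measurability of the ball-ratio liminf as a function of the center
  have hmb : ∀ (rr : ℝ), Measurable (fun x : ℝ => μ (Metric.closedBall x rr)) := by
    intro rr
    have h1 : ∀ x : ℝ, Metric.closedBall x rr = Prod.mk x ⁻¹' {q : ℝ × ℝ | dist q.2 q.1 ≤ rr} := by
      intro x
      ext y
      simp [Metric.mem_closedBall]
    simp_rw [h1]
    apply measurable_measure_prodMk_left
    exact measurableSet_le (measurable_dist.comp (measurable_snd.prodMk measurable_fst))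
      measurable_const
  have hGmeas : MeasurableSet {x : ℝ | Filter.liminf
      (fun n => (s:ℝ≥0∞)^n * μ (Metric.closedBall x ((1/(s:ℝ))^n))) Filter.atTop < ⊤} := by
    apply measurableSet_lt _ measurable_const
    exact Measurable.liminf (fun n => (hmb ((1/(s:ℝ))^n)).const_mul _)
  have hμG : ∀ᵐ x ∂μ, Filter.liminf
      (fun n => (s:ℝ≥0∞)^n * μ (Metric.closedBall x ((1/(s:ℝ))^n))) Filter.atTop < ⊤ := by
    rw [hμdef]
    exact (ae_map_iff hψmeas.aemeasurable hGmeas).2 haeball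
  -- the singular part of μ w.r.t. Lebesgue
  set ν : Measure ℝ := μ.singularPart volume with hνdef
  have hsing : ν ⟂ₘ volume := Measure.mutuallySingular_singularPart μ volume
  have hνle : ν ≤ μ := Measure.singularPart_le μ volume
  have hνG : ∀ᵐ x ∂ν, Filter.liminf
      (fun n => (s:ℝ≥0∞)^n * μ (Metric.closedBall x ((1/(s:ℝ))^n))) Filter.atTop < ⊤ :=
    hμG.filter_mono (Measure.absolutelyContinuous_of_le hνle).ae_le
  have hzero := (Besicovitch.vitaliFamily (ν : Measure ℝ)).ae_eventually_measure_zero_of_singular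
    (hsing.symm)
  have hradius : Filter.Tendsto (fun n : ℕ => (1/(s:ℝ))^n) Filter.atTop (nhdsWithin 0 (Set.Ioi 0)) := by
    apply tendsto_nhdsWithin_of_tendsto_nhds_of_eventually_within
    · exact tendsto_pow_atTop_nhds_zero_of_lt_one (by positivity) (by
        rw [div_lt_one hs0R]; exact hs1R)
    · exact Filter.Eventually.of_forall (fun n => by
        simp only [Set.mem_Ioi]
        positivity)
  have hcontra : ∀ᵐ x ∂ν, False := by
    filter_upwards [hzero, hνG] with x hx1 hx2
    obtain ⟨b, hb1, hb2⟩ : ∃ b : ℝ≥0∞, Filter.liminf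
        (fun n => (s:ℝ≥0∞)^n * μ (Metric.closedBall x ((1/(s:ℝ))^n))) Filter.atTop < b ∧
          b ≠ ⊤ :=
      ⟨_ + 1, ENNReal.lt_add_right hx2.ne one_ne_zero, by
        rw [ENNReal.add_ne_top]
        exact ⟨hx2.ne, ENNReal.one_ne_top⟩⟩
    have hfreq : ∃ᶠ n in Filter.atTop,
        (s:ℝ≥0∞)^n * μ (Metric.closedBall x ((1/(s:ℝ))^n)) < b :=
      Filter.frequently_lt_of_liminf_lt (by isBoundedDefault) hb1
    have hcomp : Filter.Tendsto (fun n : ℕ =>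
        volume (Metric.closedBall x ((1/(s:ℝ))^n)) / ν (Metric.closedBall x ((1/(s:ℝ))^n)))
        Filter.atTop (nhds 0) :=
      hx1.comp ((Besicovitch.tendsto_filterAt ν x).comp hradius)
    have h2b : (0:ℝ≥0∞) < 2 / b := ENNReal.div_pos (by simp) hb2
    have hev : ∀ᶠ n in Filter.atTop,
        volume (Metric.closedBall x ((1/(s:ℝ))^n)) / ν (Metric.closedBall x ((1/(s:ℝ))^n))
          < 2 / b := hcomp.eventually_lt_const h2b
    obtain ⟨n, hA, hB⟩ := (hfreq.and_eventually hev).exists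
    -- derive the contradiction at stage n
    set t : ℝ≥0∞ := ((s:ℝ≥0∞)^n)⁻¹ with ht
    have hsn0 : ((s:ℝ≥0∞)^n) ≠ 0 := by
      apply pow_ne_zero
      have : s ≠ 0 := by omega
      exact_mod_cast this
    have hsnt : ((s:ℝ≥0∞)^n) ≠ ⊤ := by
      apply ENNReal.pow_ne_top
      exact ENNReal.natCast_ne_top s
    have ht0 : t ≠ 0 := by
      rw [ht]
      exact ENNReal.inv_ne_zero.2 hsnt
    have httop : t ≠ ⊤ := by
      rw [ht]
      exact ENNReal.inv_ne_top.2 hsn0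
    have hvol : volume (Metric.closedBall x ((1/(s:ℝ))^n)) = 2 * t := by
      rw [Real.volume_closedBall, ENNReal.ofReal_mul (by norm_num), ht]
      congr 1
      · norm_num
      · rw [ENNReal.ofReal_pow (by positivity), ENNReal.inv_pow]
        congr 1
        rw [one_div, ENNReal.ofReal_inv_of_pos hs0R, ENNReal.ofReal_natCast]
    have hμball : μ (Metric.closedBall x ((1/(s:ℝ))^n)) ≤ b * t := by
      rw [ht]
      have h' : μ (Metric.closedBall x ((1/(s:ℝ))^n)) * (s:ℝ≥0∞)^n ≤ b := by
        rw [mul_comm]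
        exact hA.le
      rw [← ENNReal.le_div_iff_mul_le (Or.inl hsn0) (Or.inl hsnt)] at h'
      rwa [div_eq_mul_inv] at h'
    have hνball : ν (Metric.closedBall x ((1/(s:ℝ))^n)) ≤ b * t :=
      le_trans (Measure.le_iff'.1 hνle _) hμball
    have hlb : 2 / b ≤ volume (Metric.closedBall x ((1/(s:ℝ))^n))
        / ν (Metric.closedBall x ((1/(s:ℝ))^n)) := by
      calc (2:ℝ≥0∞) / b = 2 * t / (b * t) := (ENNReal.mul_div_mul_right 2 b ht0 httop).symm
        _ ≤ volume (Metric.closedBall x ((1/(s:ℝ))^n)) / ν (Metric.closedBall x ((1/(s:ℝ))^n)) := by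
            rw [hvol]
            exact ENNReal.div_le_div_left (hνball) _
    exact absurd (lt_of_le_of_lt hlb hB) (lt_irrefl _)
  -- conclude
  have hνzero : ν = 0 := by
    have h1 : ν Set.univ = 0 := by
      simpa [MeasureTheory.ae_iff] using hcontra
    exact Measure.measure_univ_eq_zero.mp h1
  have hdec := μ.haveLebesgueDecomposition_add volume
  rw [← hνdef, hνzero, zero_add] at hdec
  show μ ≪ volume
  rw [hdec]
  exact withDensity_absolutelyContinuous _ _
end
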